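/- arXiv:0803.3074 — 4 statements merged into one kernel-verified Lean document; each statement's English description precedes it below -/
import Mathlib

section
/- ∂/∂b [ e^{-b} E(e^{-b} - e^{-t}, t; 0, b) ] = -(1/4) e^{t/2} e^{-b/2} for all b < t, where E is the de Sitter fundamental solution kernel. -/
/-- The Gauss hypergeometric function `F(a,b;c;z)`, defined by its power series. -/
noncomputable def hypC (a b c z : ℂ) : ℂ :=
  ∑' n : ℕ, ((ascPochhammer ℂ n).eval a * (ascPochhammer ℂ n).eval b /
    ((ascPochhammer ℂ n).eval c * (n.factorial : ℂ))) * z ^ n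

/-- The kernel `E(x,t;0,b)` of the fundamental solution of the Klein–Gordon
equation in de Sitter spacetime. -/
noncomputable def Ek (M : ℝ) (x t b : ℝ) : ℂ :=
  (4 * Real.exp (-b - t) : ℂ) ^ (Complex.I * M) *
    ((Real.exp (-t) + Real.exp (-b) : ℂ) ^ 2 - (x : ℂ) ^ 2) ^ (-(1/2 : ℂ) - Complex.I * M) *
    hypC (1/2 + Complex.I * M) (1/2 + Complex.I * M) 1
      (((Real.exp (-b) - Real.exp (-t) : ℂ) ^ 2 - (x : ℂ) ^ 2) /
        ((Real.exp (-b) + Real.exp (-t) : ℂ) ^ 2 - (x : ℂ) ^ 2))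

lemma hypC_zero (a b c : ℂ) : hypC a b c 0 = 1 := by
  unfold hypC
  rw [tsum_eq_single 0]
  · simp
  · intro n hn; simp [zero_pow hn]

lemma Ek_char (M t b : ℝ) :
    Ek M (Real.exp (-b) - Real.exp (-t)) t b
      = ((1/2 * Real.exp ((b + t)/2) : ℝ) : ℂ) := by
  have hA : (4 * Real.exp (-b - t) : ℂ) ≠ 0 := by
    simp [Real.exp_ne_zero, Complex.ofReal_ne_zero]
  have h1 : ((Real.exp (-t) + Real.exp (-b) : ℂ)) ^ 2
      - ((Real.exp (-b) - Real.exp (-t) : ℝ) : ℂ) ^ 2 = (4 * Real.exp (-b - t) : ℂ) := by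
    push_cast
    rw [show (-(b:ℂ) - t) = (-b) + (-t) by ring, Complex.exp_add]
    ring
  have h2 : ((Real.exp (-b) - Real.exp (-t) : ℂ)) ^ 2
      - ((Real.exp (-b) - Real.exp (-t) : ℝ) : ℂ) ^ 2 = 0 := by push_cast; ring
  unfold Ek
  rw [h1, h2, zero_div, hypC_zero, mul_one, ← Complex.cpow_add _ _ hA]
  rw [show Complex.I * M + (-(1/2 : ℂ) - Complex.I * M) = ((-(1/2) : ℝ) : ℂ) by push_cast; ring]
  have h4 : ((4 * Real.exp (-b - t) : ℝ) : ℂ) = (4 * Real.exp (-b - t) : ℂ) := by push_cast; ring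
  rw [← h4, ← Complex.ofReal_cpow (by positivity)]
  congr 1
  have hsq : (4 * Real.exp (-b - t) : ℝ) = (2 * Real.exp (-(b + t)/2)) ^ 2 := by
    have e : Real.exp (-b - t) = Real.exp (-(b+t)/2) * Real.exp (-(b+t)/2) := by
      rw [← Real.exp_add]; congr 1; ring
    rw [e]; ring
  rw [hsq, ← Real.rpow_natCast (2 * Real.exp (-(b + t)/2)) 2, ← Real.rpow_mul (by positivity)]
  norm_num
  rw [Real.rpow_neg_one, mul_inv, ← Real.exp_neg,
    show -((-t + -b)/2) = (b + t)/2 by ring]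
  norm_num

/-- `∂/∂b [ e^{-b} E(e^{-b}-e^{-t}, t; 0, b) ] = -(1/4) e^{t/2} e^{-b/2}` for `b < t`. -/
theorem deriv_exp_mul_E_on_characteristic (M : ℝ) (hM : 0 ≤ M) (t b : ℝ) (hbt : b < t) :
    deriv (fun b' => ((Real.exp (-b') : ℝ) : ℂ) *
        Ek M (Real.exp (-b') - Real.exp (-t)) t b') b
      = ((-(1/4) * Real.exp (t/2) * Real.exp (-b/2) : ℝ) : ℂ) := by
  have hfun : (fun b' => ((Real.exp (-b') : ℝ) : ℂ) *
        Ek M (Real.exp (-b') - Real.exp (-t)) t b')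
      = fun b' => ((1/2 * Real.exp (t/2) * Real.exp (-b'/2) : ℝ) : ℂ) := by
    funext b'
    rw [Ek_char, ← Complex.ofReal_mul]
    congr 1
    rw [show Real.exp (-b') * (1/2 * Real.exp ((b' + t)/2))
        = 1/2 * (Real.exp (-b') * Real.exp ((b' + t)/2)) by ring, ← Real.exp_add,
      show (1:ℝ)/2 * Real.exp (t/2) * Real.exp (-b'/2)
        = 1/2 * (Real.exp (t/2) * Real.exp (-b'/2)) by ring, ← Real.exp_add]
    congr 2
    ring
  rw [hfun]
  have hg : HasDerivAt (fun b' : ℝ => 1/2 * Real.exp (t/2) * Real.exp (-b'/2))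
      (-(1/4) * Real.exp (t/2) * Real.exp (-b/2)) b := by
    have h1 : HasDerivAt (fun b' : ℝ => -b'/2) (-1/2) b :=
      (hasDerivAt_id b).neg.div_const 2
    have h2 := (h1.exp).const_mul (1/2 * Real.exp (t/2))
    exact h2.congr_deriv (by ring)
  exact (hg.ofReal_comp.deriv)
end

section
/- As y → x + e^{-b} - e^{-t} (from inside the light cone), the limit of ∂/∂x E(x-y, t; 0, b) equals -(1/16)(1 + 4M²) e^{t/2} e^{b/2} (e^t - e^b), for b < t. -/
open Filter Set Complex

noncomputable def hcoef (a : ℂ) (n : ℕ) : ℂ :=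
  (ascPochhammer ℂ n).eval a * (ascPochhammer ℂ n).eval a /
    ((ascPochhammer ℂ n).eval 1 * (n.factorial : ℂ))

noncomputable def Rr (a : ℂ) : ℝ := ((1 + ‖a‖) ^ 2)⁻¹ / 2

lemma Rr_pos (a : ℂ) : 0 < Rr a := by
  have := norm_nonneg a
  unfold Rr
  positivity

lemma norm_asc_le (a : ℂ) (n : ℕ) :
    ‖(ascPochhammer ℂ n).eval a‖ ≤ (1 + ‖a‖) ^ n * n.factorial := by
  induction n with
  | zero => simp
  | succ n ih =>
    rw [ascPochhammer_succ_eval]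
    have h1 : ‖a + (n : ℂ)‖ ≤ (1 + ‖a‖) * (n + 1) := by
      calc ‖a + (n : ℂ)‖ ≤ ‖a‖ + ‖(n : ℂ)‖ := norm_add_le _ _
        _ = ‖a‖ + n := by simp
        _ ≤ (1 + ‖a‖) * (n + 1) := by nlinarith [norm_nonneg a]
    calc ‖(ascPochhammer ℂ n).eval a * (a + n)‖
        = ‖(ascPochhammer ℂ n).eval a‖ * ‖a + (n : ℂ)‖ := norm_mul _ _
      _ ≤ ((1 + ‖a‖) ^ n * n.factorial) * ((1 + ‖a‖) * (n + 1)) := by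
          apply mul_le_mul ih h1 (norm_nonneg _)
          positivity
      _ = (1 + ‖a‖) ^ (n + 1) * (n + 1).factorial := by
          rw [Nat.factorial_succ]
          push_cast
          ring

lemma norm_hcoef_le (a : ℂ) (n : ℕ) : ‖hcoef a n‖ ≤ ((1 + ‖a‖) ^ 2) ^ n := by
  have hfac : (0 : ℝ) < (n.factorial : ℝ) := by exact_mod_cast n.factorial_pos
  have h1 := norm_asc_le a n
  have heq : ‖hcoef a n‖ =
      ‖(ascPochhammer ℂ n).eval a‖ * ‖(ascPochhammer ℂ n).eval a‖ /
        ((n.factorial : ℝ) * (n.factorial : ℝ)) := by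
    simp [hcoef, norm_div, norm_mul, ascPochhammer_eval_one]
  rw [heq, div_le_iff₀ (by positivity)]
  have h2 : ((1 + ‖a‖) ^ 2) ^ n = ((1 + ‖a‖) ^ n) * ((1 + ‖a‖) ^ n) := by
    rw [← pow_mul, two_mul, pow_add]
  nlinarith [norm_nonneg ((ascPochhammer ℂ n).eval a), pow_nonneg (by positivity : (0:ℝ) ≤ 1 + ‖a‖) n]

lemma summable_hcoef (a : ℂ) {ρ : ℝ} (hρ0 : 0 ≤ ρ) (hρ : (1 + ‖a‖) ^ 2 * ρ < 1) :
    Summable (fun n => ‖hcoef a n‖ * ρ ^ n) := by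
  refine Summable.of_nonneg_of_le (fun n => by positivity) (fun n => ?_)
    (summable_geometric_of_lt_one (by positivity) hρ)
  calc ‖hcoef a n‖ * ρ ^ n ≤ ((1 + ‖a‖) ^ 2) ^ n * ρ ^ n := by
        apply mul_le_mul_of_nonneg_right (norm_hcoef_le a n) (by positivity)
    _ = ((1 + ‖a‖) ^ 2 * ρ) ^ n := (mul_pow _ _ _).symm

lemma mul_Rr_lt (a : ℂ) {ρ : ℝ} (hρ : ρ < Rr a) : (1 + ‖a‖) ^ 2 * ρ < 1 := by
  have h0 : (0:ℝ) < (1 + ‖a‖) ^ 2 := by positivity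
  have : (1 + ‖a‖) ^ 2 * ρ < (1 + ‖a‖) ^ 2 * Rr a := by
    exact mul_lt_mul_of_pos_left hρ h0
  have h2 : (1 + ‖a‖) ^ 2 * Rr a = 1 / 2 := by
    unfold Rr
    field_simp
  linarith

lemma hyp_hasFPS (a : ℂ) :
    HasFPowerSeriesOnBall (fun z => hypC a a 1 z)
      (FormalMultilinearSeries.ofScalars ℂ (hcoef a)) 0 (ENNReal.ofReal (Rr a)) := by
  constructor
  · rw [ENNReal.ofReal]
    apply FormalMultilinearSeries.le_radius_of_summable_norm
    have hcoe : ((Rr a).toNNReal : ℝ) = Rr a := Real.coe_toNNReal _ (Rr_pos a).le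
    simp only [FormalMultilinearSeries.ofScalars_norm, hcoe]
    exact summable_hcoef a (Rr_pos a).le (by
      have := mul_Rr_lt a (show Rr a / 2 < Rr a by linarith [Rr_pos a])
      have h2 : (1 + ‖a‖) ^ 2 * Rr a = 1 / 2 := by unfold Rr; field_simp
      linarith [h2])
  · exact ENNReal.ofReal_pos.mpr (Rr_pos a)
  · intro y hy
    rw [mem_emetric_ball_zero_iff, ← ofReal_norm,
      ENNReal.ofReal_lt_ofReal_iff (Rr_pos a)] at hy
    have hs : Summable (fun n => hcoef a n * y ^ n) := by
      apply Summable.of_norm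
      have := summable_hcoef a (norm_nonneg y) (mul_Rr_lt a hy)
      simpa [norm_mul, norm_pow] using this
    simp only [FormalMultilinearSeries.ofScalars_apply_eq, smul_eq_mul, zero_add]
    exact hs.hasSum

lemma hyp_analyticAt (a : ℂ) {w : ℂ} (hw : ‖w‖ < Rr a) :
    AnalyticAt ℂ (fun z => hypC a a 1 z) w := by
  apply (hyp_hasFPS a).analyticAt_of_mem
  rw [EMetric.mem_ball, edist_zero_right, ← ofReal_norm,
    ENNReal.ofReal_lt_ofReal_iff (Rr_pos a)]
  exact hw

lemma hyp_zero (a : ℂ) : hypC a a 1 0 = 1 := by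
  unfold hypC
  rw [tsum_eq_single 0]
  · simp
  · intro n hn
    simp [zero_pow hn]

lemma deriv_hyp_zero (a : ℂ) : deriv (fun z => hypC a a 1 z) 0 = a * a := by
  rw [(hyp_hasFPS a).hasFPowerSeriesAt.deriv, FormalMultilinearSeries.ofScalars_apply_eq]
  simp [hcoef, ascPochhammer_one]

lemma contAt_deriv_hyp (a : ℂ) : ContinuousAt (deriv (fun z => hypC a a 1 z)) 0 := by
  have h := (hyp_hasFPS a).analyticOnNhd.deriv 0 (by
    rw [EMetric.mem_ball, edist_self]
    exact ENNReal.ofReal_pos.mpr (Rr_pos a))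
  exact h.continuousAt

lemma comp_real_hasDerivAt {g : ℂ → ℂ} {d : ℂ} {f : ℝ → ℂ} {f' : ℂ} {x : ℝ}
    (hg : HasDerivAt g d (f x)) (hf : HasDerivAt f f' x) :
    HasDerivAt (fun y => g (f y)) (d * f') x := by
  have h := (hg.hasFDerivAt.restrictScalars ℝ).comp_hasDerivAt x hf
  have e : (ContinuousLinearMap.restrictScalars ℝ (ContinuousLinearMap.toSpanSingleton ℂ d)) f'
      = d * f' := by simp [mul_comm]
  rw [e] at h
  exact h

noncomputable def uu (t b z : ℝ) : ℝ := (Real.exp (-t) + Real.exp (-b)) ^ 2 - z ^ 2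
noncomputable def vv (t b z : ℝ) : ℝ := (Real.exp (-b) - Real.exp (-t)) ^ 2 - z ^ 2
noncomputable def ww (t b z : ℝ) : ℝ := vv t b z / uu t b z
noncomputable def aM (M : ℝ) : ℂ := 1/2 + Complex.I * M
noncomputable def e1 (M : ℝ) : ℂ := -(1/2 : ℂ) - Complex.I * M
noncomputable def hypF (M : ℝ) : ℂ → ℂ := fun w => hypC (aM M) (aM M) 1 w

noncomputable def gfun (M t b : ℝ) (z : ℝ) : ℂ :=
  ((4 * Real.exp (-b - t) : ℝ) : ℂ) ^ (Complex.I * M) *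
    (e1 M * ((uu t b z : ℝ) : ℂ) ^ (e1 M - 1) * ((-(2*z) : ℝ) : ℂ) * hypF M ((ww t b z : ℝ) : ℂ)
     + ((uu t b z : ℝ) : ℂ) ^ (e1 M) *
       (deriv (hypF M) ((ww t b z : ℝ) : ℂ) *
         (((-(2*z) * uu t b z - vv t b z * -(2*z)) / (uu t b z) ^ 2 : ℝ) : ℂ)))

lemma hasDerivAt_Ek (M t b : ℝ) (z : ℝ) (hu : 0 < uu t b z)
    (hw : ‖((ww t b z : ℝ) : ℂ)‖ < Rr (aM M)) :
    HasDerivAt (fun z' : ℝ => Ek M z' t b) (gfun M t b z) z := by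
  have hEk : (fun z' : ℝ => Ek M z' t b)
      = fun z' => ((4 * Real.exp (-b - t) : ℝ) : ℂ) ^ (Complex.I * M) *
          (((uu t b z' : ℝ) : ℂ) ^ (e1 M) * hypF M ((ww t b z' : ℝ) : ℂ)) := by
    funext z'
    have h0 : (4 * Real.exp (-b - t) : ℂ) = ((4 * Real.exp (-b - t) : ℝ) : ℂ) := by
      push_cast; ring
    have h1 : ((Real.exp (-t) + Real.exp (-b) : ℂ)) ^ 2 - (z' : ℂ) ^ 2
        = ((uu t b z' : ℝ) : ℂ) := by unfold uu; push_cast; ring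
    have h2 : (((Real.exp (-b) - Real.exp (-t) : ℂ)) ^ 2 - (z' : ℂ) ^ 2) /
          (((Real.exp (-b) + Real.exp (-t) : ℂ)) ^ 2 - (z' : ℂ) ^ 2)
        = ((ww t b z' : ℝ) : ℂ) := by
      unfold ww uu vv; push_cast; ring
    rw [Ek, h0, h1, h2, mul_assoc]
    rfl
  rw [hEk]
  have hne : uu t b z ≠ 0 := ne_of_gt hu
  have hud : HasDerivAt (fun z => uu t b z) (-(2*z)) z := by
    unfold uu
    simpa using (hasDerivAt_pow 2 z).const_sub ((Real.exp (-t) + Real.exp (-b)) ^ 2)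
  have hvd : HasDerivAt (fun z => vv t b z) (-(2*z)) z := by
    unfold vv
    simpa using (hasDerivAt_pow 2 z).const_sub ((Real.exp (-b) - Real.exp (-t)) ^ 2)
  have hwd : HasDerivAt (fun z => ww t b z)
      ((-(2*z) * uu t b z - vv t b z * -(2*z)) / (uu t b z) ^ 2) z := hvd.div hud hne
  have hslit : ((uu t b z : ℝ) : ℂ) ∈ Complex.slitPlane :=
    Complex.ofReal_mem_slitPlane.2 hu
  have hcp : HasDerivAt (fun z : ℝ => ((uu t b z : ℝ) : ℂ) ^ (e1 M))
      (e1 M * ((uu t b z : ℝ) : ℂ) ^ (e1 M - 1) * ((-(2*z) : ℝ) : ℂ)) z := by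
    have h := (Complex.hasStrictDerivAt_cpow_const (c := e1 M) hslit).hasDerivAt
    exact comp_real_hasDerivAt (g := fun w : ℂ => w ^ e1 M)
      (f := fun y : ℝ => ((uu t b y : ℝ) : ℂ)) h hud.ofReal_comp
  have hhd : HasDerivAt (fun z : ℝ => hypF M ((ww t b z : ℝ) : ℂ))
      (deriv (hypF M) ((ww t b z : ℝ) : ℂ) *
        (((-(2*z) * uu t b z - vv t b z * -(2*z)) / (uu t b z) ^ 2 : ℝ) : ℂ)) z := by
    have hda : DifferentiableAt ℂ (hypF M) ((ww t b z : ℝ) : ℂ) :=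
      (hyp_analyticAt (aM M) hw).differentiableAt
    exact comp_real_hasDerivAt hda.hasDerivAt hwd.ofReal_comp
  have hmain := (hcp.mul hhd).const_mul
    (((4 * Real.exp (-b - t) : ℝ) : ℂ) ^ (Complex.I * (M : ℂ)))
  exact hmain

lemma gfun_val (M t b : ℝ) (hbt : b < t) :
    gfun M t b (-(Real.exp (-b) - Real.exp (-t))) =
      -(1/16 : ℂ) * (1 + 4 * (M : ℂ) ^ 2) * ((Real.exp (t/2) : ℝ) : ℂ) *
        ((Real.exp (b/2) : ℝ) : ℂ) * ((Real.exp t - Real.exp b : ℝ) : ℂ) := by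
  have hexp : Real.exp (-b - t) = Real.exp (-b) * Real.exp (-t) := by
    rw [← Real.exp_add]; ring_nf
  have hCc : (0:ℝ) < 4 * Real.exp (-b - t) := by positivity
  have hk0 : ((4 * Real.exp (-b - t) : ℝ) : ℂ) ≠ 0 := by
    exact_mod_cast ne_of_gt hCc
  have huu : uu t b (-(Real.exp (-b) - Real.exp (-t))) = 4 * Real.exp (-b - t) := by
    unfold uu; rw [hexp]; ring
  have hvv : vv t b (-(Real.exp (-b) - Real.exp (-t))) = 0 := by
    unfold vv; ring
  have hww : ww t b (-(Real.exp (-b) - Real.exp (-t))) = 0 := by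
    unfold ww; rw [hvv]; simp
  have h3 : hypF M ((0:ℝ) : ℂ) = 1 := by
    rw [Complex.ofReal_zero]; exact hyp_zero (aM M)
  have h4 : deriv (hypF M) ((0:ℝ) : ℂ) = aM M * aM M := by
    rw [Complex.ofReal_zero]; exact deriv_hyp_zero (aM M)
  have hsplit : ((4 * Real.exp (-b - t) : ℝ) : ℂ) ^ (e1 M - 1)
      = ((4 * Real.exp (-b - t) : ℝ) : ℂ) ^ (e1 M) * ((4 * Real.exp (-b - t) : ℝ) : ℂ)⁻¹ := by
    rw [Complex.cpow_sub _ _ hk0, Complex.cpow_one, div_eq_mul_inv]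
  have hfrac : (((-(2 * -(Real.exp (-b) - Real.exp (-t))) * (4 * Real.exp (-b - t)) -
        0 * -(2 * -(Real.exp (-b) - Real.exp (-t)))) / (4 * Real.exp (-b - t)) ^ 2 : ℝ) : ℂ)
      = ((2 * (Real.exp (-b) - Real.exp (-t)) : ℝ) : ℂ) *
          ((4 * Real.exp (-b - t) : ℝ) : ℂ)⁻¹ := by
    rw [show (-(2 * -(Real.exp (-b) - Real.exp (-t))) * (4 * Real.exp (-b - t)) -
        0 * -(2 * -(Real.exp (-b) - Real.exp (-t)))) / (4 * Real.exp (-b - t)) ^ 2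
        = (2 * (Real.exp (-b) - Real.exp (-t))) / (4 * Real.exp (-b - t)) from by
      field_simp; ring]
    rw [Complex.ofReal_div, div_eq_mul_inv]
  have step1 : gfun M t b (-(Real.exp (-b) - Real.exp (-t)))
      = ((4 * Real.exp (-b - t) : ℝ) : ℂ) ^ (Complex.I * (M:ℂ)) *
          ((4 * Real.exp (-b - t) : ℝ) : ℂ) ^ (e1 M) *
          ((4 * Real.exp (-b - t) : ℝ) : ℂ)⁻¹ *
          ((2 * (Real.exp (-b) - Real.exp (-t)) : ℝ) : ℂ) * (e1 M + aM M * aM M) := by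
    unfold gfun
    rw [huu, hvv, hww]
    rw [show ((-(2 * -(Real.exp (-b) - Real.exp (-t))) : ℝ) : ℂ)
        = ((2 * (Real.exp (-b) - Real.exp (-t)) : ℝ) : ℂ) from by push_cast; ring]
    rw [h3, h4, hsplit, hfrac]
    ring
  have hk32 : ((4 * Real.exp (-b - t) : ℝ) : ℂ) ^ (Complex.I * (M:ℂ)) *
        ((4 * Real.exp (-b - t) : ℝ) : ℂ) ^ (e1 M) *
        ((4 * Real.exp (-b - t) : ℝ) : ℂ)⁻¹
      = (((4 * Real.exp (-b - t)) ^ (-(3/2) : ℝ) : ℝ) : ℂ) := by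
    rw [← Complex.cpow_neg_one ((4 * Real.exp (-b - t) : ℝ) : ℂ),
      ← Complex.cpow_add _ _ hk0, ← Complex.cpow_add _ _ hk0]
    rw [show Complex.I * (M:ℂ) + e1 M + (-1) = ((-(3/2) : ℝ) : ℂ) from by
      unfold e1; push_cast; ring]
    rw [← Complex.ofReal_cpow hCc.le]
  have hae : e1 M + aM M * aM M = -(1/4 : ℂ) * (1 + 4 * (M:ℂ)^2) := by
    unfold e1 aM
    linear_combination (M:ℂ)^2 * Complex.I_sq
  have hreal : (4 * Real.exp (-b - t)) ^ (-(3/2) : ℝ) * (2 * (Real.exp (-b) - Real.exp (-t)))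
      = (1/4) * (Real.exp (t/2) * (Real.exp (b/2) * (Real.exp t - Real.exp b))) := by
    rw [Real.mul_rpow (by norm_num) (Real.exp_pos _).le]
    have h4r : (4:ℝ) ^ (-(3/2) : ℝ) = 1/8 := by
      rw [show (4:ℝ) = 2 ^ (2:ℕ) by norm_num, ← Real.rpow_natCast 2 2,
        ← Real.rpow_mul (by norm_num : (0:ℝ) ≤ 2)]
      rw [show ((2:ℕ):ℝ) * (-(3/2) : ℝ) = ((-3 : ℤ) : ℝ) by norm_num, Real.rpow_intCast]
      norm_num
    have hexp32 : Real.exp (-b - t) ^ (-(3/2) : ℝ) = Real.exp ((3/2) * (b + t)) := by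
      rw [Real.rpow_def_of_pos (Real.exp_pos _), Real.log_exp]
      congr 1; ring
    rw [h4r, hexp32]
    have e1' : Real.exp ((3/2) * (b + t)) * Real.exp (-b) = Real.exp (b/2 + 3*t/2) := by
      rw [← Real.exp_add]; congr 1; ring
    have e2' : Real.exp ((3/2) * (b + t)) * Real.exp (-t) = Real.exp (3*b/2 + t/2) := by
      rw [← Real.exp_add]; congr 1; ring
    have e3' : Real.exp (t/2) * (Real.exp (b/2) * Real.exp t) = Real.exp (b/2 + 3*t/2) := by
      rw [← Real.exp_add, ← Real.exp_add]; congr 1; ring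
    have e4' : Real.exp (t/2) * (Real.exp (b/2) * Real.exp b) = Real.exp (3*b/2 + t/2) := by
      rw [← Real.exp_add, ← Real.exp_add]; congr 1; ring
    nlinarith [e1', e2', e3', e4']
  rw [step1, hk32, hae]
  have hrealC := congrArg (fun r : ℝ => (r : ℂ)) hreal
  push_cast at hrealC
  push_cast
  linear_combination (-(1/4) * (1 + 4 * (M:ℂ)^2)) * hrealC

lemma gfun_contAt (M t b : ℝ) (hbt : b < t) :
    ContinuousAt (gfun M t b) (-(Real.exp (-b) - Real.exp (-t))) := by
  have hexp : Real.exp (-b - t) = Real.exp (-b) * Real.exp (-t) := by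
    rw [← Real.exp_add]; ring_nf
  have huu : uu t b (-(Real.exp (-b) - Real.exp (-t))) = 4 * Real.exp (-b - t) := by
    unfold uu; rw [hexp]; ring
  have hupos : 0 < uu t b (-(Real.exp (-b) - Real.exp (-t))) := by rw [huu]; positivity
  have hvv : vv t b (-(Real.exp (-b) - Real.exp (-t))) = 0 := by unfold vv; ring
  have hww : ww t b (-(Real.exp (-b) - Real.exp (-t))) = 0 := by unfold ww; rw [hvv]; simp
  have hucont : ContinuousAt (uu t b) (-(Real.exp (-b) - Real.exp (-t))) := by
    unfold uu; fun_prop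
  have hvcont : ContinuousAt (vv t b) (-(Real.exp (-b) - Real.exp (-t))) := by
    unfold vv; fun_prop
  have hwcont : ContinuousAt (ww t b) (-(Real.exp (-b) - Real.exp (-t))) := by
    unfold ww
    exact hvcont.div hucont (ne_of_gt hupos)
  have huCc : ContinuousAt (fun z => ((uu t b z : ℝ) : ℂ))
      (-(Real.exp (-b) - Real.exp (-t))) :=
    Complex.continuous_ofReal.continuousAt.comp hucont
  have hwCc : ContinuousAt (fun z => ((ww t b z : ℝ) : ℂ))
      (-(Real.exp (-b) - Real.exp (-t))) :=
    Complex.continuous_ofReal.continuousAt.comp hwcont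
  have hre : (0:ℝ) < (((uu t b (-(Real.exp (-b) - Real.exp (-t))) : ℝ) : ℂ)).re ∨
      (((uu t b (-(Real.exp (-b) - Real.exp (-t))) : ℝ) : ℂ)).im ≠ 0 := by
    left; rw [Complex.ofReal_re]; exact hupos
  have hcpow1 : ContinuousAt (fun z => ((uu t b z : ℝ) : ℂ) ^ (e1 M - 1))
      (-(Real.exp (-b) - Real.exp (-t))) := huCc.cpow continuousAt_const hre
  have hcpow2 : ContinuousAt (fun z => ((uu t b z : ℝ) : ℂ) ^ (e1 M))
      (-(Real.exp (-b) - Real.exp (-t))) := huCc.cpow continuousAt_const hre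
  have hhyp : ContinuousAt (fun z => hypF M ((ww t b z : ℝ) : ℂ))
      (-(Real.exp (-b) - Real.exp (-t))) := by
    apply ContinuousAt.comp ?_ hwCc
    rw [hww, Complex.ofReal_zero]
    exact (hyp_analyticAt (aM M) (by simpa using Rr_pos (aM M))).continuousAt
  have hder : ContinuousAt (fun z => deriv (hypF M) ((ww t b z : ℝ) : ℂ))
      (-(Real.exp (-b) - Real.exp (-t))) := by
    have h0 : ContinuousAt (deriv (hypF M))
        ((ww t b (-(Real.exp (-b) - Real.exp (-t))) : ℝ) : ℂ) := by
      rw [hww, Complex.ofReal_zero]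
      exact contAt_deriv_hyp (aM M)
    exact ContinuousAt.comp (g := deriv (hypF M))
      (f := fun z : ℝ => ((ww t b z : ℝ) : ℂ)) h0 hwCc
  have hfrac : ContinuousAt
      (fun z => (((-(2*z) * uu t b z - vv t b z * -(2*z)) / (uu t b z) ^ 2 : ℝ) : ℂ))
      (-(Real.exp (-b) - Real.exp (-t))) := by
    apply Complex.continuous_ofReal.continuousAt.comp
    apply ContinuousAt.div
    · exact ((continuousAt_const.mul continuousAt_id).neg.mul hucont).sub
        (hvcont.mul (continuousAt_const.mul continuousAt_id).neg)
    · exact hucont.pow 2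
    · exact pow_ne_zero 2 (ne_of_gt hupos)
  have hneg2 : ContinuousAt (fun z : ℝ => ((-(2*z) : ℝ) : ℂ))
      (-(Real.exp (-b) - Real.exp (-t))) := by fun_prop
  exact continuousAt_const.mul
    ((((continuousAt_const.mul hcpow1).mul hneg2).mul hhyp).add
      (hcpow2.mul (hder.mul hfrac)))

/-- As `y → x + e^{-b} - e^{-t}` from inside the light cone, the limit of
`∂/∂x E(x-y,t;0,b)` equals `-(1/16)(1+4M²) e^{t/2} e^{b/2} (e^t - e^b)`, for `b < t`. -/
theorem limit_deriv_E_at_light_cone (M : ℝ) (hM : 0 ≤ M) (t b : ℝ) (hbt : b < t) (x : ℝ) :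
    Filter.Tendsto (fun y => deriv (fun x' => Ek M (x' - y) t b) x)
      (nhdsWithin (x + (Real.exp (-b) - Real.exp (-t)))
        (Set.Iio (x + (Real.exp (-b) - Real.exp (-t)))))
      (nhds (-(1/16 : ℂ) * (1 + 4 * (M : ℂ) ^ 2) *
        ((Real.exp (t/2) : ℝ) : ℂ) * ((Real.exp (b/2) : ℝ) : ℂ) *
        ((Real.exp t - Real.exp b : ℝ) : ℂ))) := by
  have hexp : Real.exp (-b - t) = Real.exp (-b) * Real.exp (-t) := by
    rw [← Real.exp_add]; ring_nf
  have huu : uu t b (-(Real.exp (-b) - Real.exp (-t))) = 4 * Real.exp (-b - t) := by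
    unfold uu; rw [hexp]; ring
  have hupos : 0 < uu t b (-(Real.exp (-b) - Real.exp (-t))) := by rw [huu]; positivity
  have hvv : vv t b (-(Real.exp (-b) - Real.exp (-t))) = 0 := by unfold vv; ring
  have hww0 : ww t b (-(Real.exp (-b) - Real.exp (-t))) = 0 := by unfold ww; rw [hvv]; simp
  have hucont : ContinuousAt (uu t b) (-(Real.exp (-b) - Real.exp (-t))) := by
    unfold uu; fun_prop
  have hvcont : ContinuousAt (vv t b) (-(Real.exp (-b) - Real.exp (-t))) := by
    unfold vv; fun_prop
  have hwncont : ContinuousAt (fun z => ‖((ww t b z : ℝ) : ℂ)‖)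
      (-(Real.exp (-b) - Real.exp (-t))) := by
    apply ContinuousAt.norm
    apply Complex.continuous_ofReal.continuousAt.comp
    unfold ww
    exact hvcont.div hucont (ne_of_gt hupos)
  have hφn : Filter.Tendsto (fun y => x - y)
      (nhdsWithin (x + (Real.exp (-b) - Real.exp (-t)))
        (Set.Iio (x + (Real.exp (-b) - Real.exp (-t)))))
      (nhds (-(Real.exp (-b) - Real.exp (-t)))) := by
    have hc : Continuous (fun y : ℝ => x - y) := by fun_prop
    have h := hc.tendsto (x + (Real.exp (-b) - Real.exp (-t)))
    rw [show x - (x + (Real.exp (-b) - Real.exp (-t))) = -(Real.exp (-b) - Real.exp (-t))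
      from by ring] at h
    exact h.mono_left nhdsWithin_le_nhds
  have hgood : ∀ᶠ z in nhds (-(Real.exp (-b) - Real.exp (-t))),
      0 < uu t b z ∧ ‖((ww t b z : ℝ) : ℂ)‖ < Rr (aM M) := by
    have hlt : ‖((ww t b (-(Real.exp (-b) - Real.exp (-t))) : ℝ) : ℂ)‖ < Rr (aM M) := by
      rw [hww0]; simpa using Rr_pos (aM M)
    filter_upwards [hucont.eventually (eventually_gt_nhds hupos),
      hwncont.eventually (eventually_lt_nhds hlt)] with z h1 h2
    exact ⟨h1, h2⟩
  have heq : ∀ᶠ y in nhdsWithin (x + (Real.exp (-b) - Real.exp (-t)))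
      (Set.Iio (x + (Real.exp (-b) - Real.exp (-t)))),
      deriv (fun x' => Ek M (x' - y) t b) x = gfun M t b (x - y) := by
    filter_upwards [hφn.eventually hgood] with y hy
    have hd := hasDerivAt_Ek M t b (x - y) hy.1 hy.2
    have hcomp : HasDerivAt (fun x' : ℝ => Ek M (x' - y) t b) (gfun M t b (x - y)) x := by
      have hsub : HasDerivAt (fun x' : ℝ => x' - y) 1 x := (hasDerivAt_id x).sub_const y
      have h := hd.scomp x hsub
      rw [one_smul] at h
      exact h
    exact hcomp.deriv
  have hlim : Filter.Tendsto (fun y => gfun M t b (x - y))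
      (nhdsWithin (x + (Real.exp (-b) - Real.exp (-t)))
        (Set.Iio (x + (Real.exp (-b) - Real.exp (-t)))))
      (nhds (gfun M t b (-(Real.exp (-b) - Real.exp (-t))))) :=
    (gfun_contAt M t b hbt).tendsto.comp hφn
  rw [gfun_val M t b hbt] at hlim
  exact Filter.Tendsto.congr' (Filter.EventuallyEq.symm heq) hlim
end

section
/- Assume -1 < α ≤ 0 where α = 2s - n(1/p - 1/q). There is a constant C such that for all z > 1: ∫₀^{z-1} r^α ((z+1)² - r²)^{-1/2} F(1/2, 1/2; 1; ((z-1)²-r²)/((z+1)²-r²)) dr ≤ C z^{-1} (z-1)^{1+α} (1 + ln z). -/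
/-- The Gauss hypergeometric function `F(a,b;c;z)` over `ℝ`, by its power series. -/
noncomputable def hypR (a b c z : ℝ) : ℝ :=
  ∑' n : ℕ, ((ascPochhammer ℝ n).eval a * (ascPochhammer ℝ n).eval b /
    ((ascPochhammer ℝ n).eval c * (n.factorial : ℝ))) * z ^ n

open Real

/-- The coefficient of `x^n` in `F(1/2,1/2;1;x)`. -/
noncomputable def hc (n : ℕ) : ℝ :=
  (ascPochhammer ℝ n).eval (1/2) * (ascPochhammer ℝ n).eval (1/2) /
    ((ascPochhammer ℝ n).eval 1 * (n.factorial : ℝ))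

lemma hypR_eq (x : ℝ) : hypR (1/2) (1/2) 1 x = ∑' n : ℕ, hc n * x ^ n := rfl

lemma ph_nonneg (n : ℕ) : 0 ≤ (ascPochhammer ℝ n).eval (1/2) := by
  induction n with
  | zero => simp
  | succ n ih =>
    rw [ascPochhammer_succ_eval]
    have : (0:ℝ) ≤ (1/2 : ℝ) + n := by positivity
    positivity

lemma ph_sq_le (n : ℕ) :
    ((ascPochhammer ℝ n).eval (1/2)) ^ 2 * (2 * n + 1) ≤ ((n.factorial : ℝ)) ^ 2 := by
  induction n with
  | zero => norm_num
  | succ n ih =>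
    rw [ascPochhammer_succ_eval, Nat.factorial_succ]
    push_cast
    have h2 : (0:ℝ) ≤ (n:ℝ) := n.cast_nonneg
    have hq : (2*(n:ℝ)+1)*(2*n+3)/4 ≤ ((n:ℝ)+1)^2 := by nlinarith
    calc ((ascPochhammer ℝ n).eval (1/2) * (1/2 + (n:ℝ))) ^ 2 * (2 * ((n:ℝ) + 1) + 1)
        = (((ascPochhammer ℝ n).eval (1/2)) ^ 2 * (2 * n + 1)) * ((2*(n:ℝ)+1)*(2*n+3)/4) := by
          ring
      _ ≤ ((n.factorial : ℝ)) ^ 2 * (((n:ℝ)+1)^2) := by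
          apply mul_le_mul ih hq (by positivity) (by positivity)
      _ = (((n:ℝ) + 1) * (n.factorial : ℝ)) ^ 2 := by ring

lemma hc_nonneg (n : ℕ) : 0 ≤ hc n := by
  unfold hc
  have := ph_nonneg n
  have : (0:ℝ) < (n.factorial : ℝ) := by exact_mod_cast n.factorial_pos
  rw [ascPochhammer_eval_one]
  positivity

lemma hc_zero : hc 0 = 1 := by norm_num [hc]

lemma hc_le (n : ℕ) : hc n * (2 * n + 1) ≤ 1 := by
  unfold hc
  rw [ascPochhammer_eval_one]
  have hf : (0:ℝ) < (n.factorial : ℝ) := by exact_mod_cast n.factorial_pos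
  rw [div_mul_eq_mul_div, div_le_one (by positivity)]
  calc (ascPochhammer ℝ n).eval (1/2) * (ascPochhammer ℝ n).eval (1/2) * (2 * n + 1)
      = ((ascPochhammer ℝ n).eval (1/2)) ^ 2 * (2 * n + 1) := by ring
    _ ≤ ((n.factorial : ℝ)) ^ 2 := ph_sq_le n
    _ = (n.factorial : ℝ) * (n.factorial : ℝ) := sq ((n.factorial : ℝ))

lemma hc_le_one (n : ℕ) : hc n ≤ 1 := by
  have h := hc_le n
  have h2 : (1:ℝ) ≤ 2 * n + 1 := by have := n.cast_nonneg (α := ℝ); linarith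
  nlinarith [hc_nonneg n]

lemma hc_succ_le (n : ℕ) : hc (n + 1) ≤ 1 / (n + 1) := by
  have h := hc_le (n + 1)
  have hpos : (0:ℝ) < (n:ℝ) + 1 := by positivity
  rw [le_div_iff₀ hpos]
  have h2 : ((n:ℝ) + 1) ≤ 2 * (n + 1 : ℕ) + 1 := by push_cast; linarith
  nlinarith [hc_nonneg (n + 1)]


lemma hyp_summable {x : ℝ} (h0 : 0 ≤ x) (h1 : x < 1) :
    Summable (fun n : ℕ => hc n * x ^ n) := by
  apply Summable.of_nonneg_of_le (fun n => mul_nonneg (hc_nonneg n) (by positivity))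
    (fun n => ?_) (summable_geometric_of_lt_one h0 h1)
  calc hc n * x ^ n ≤ 1 * x ^ n :=
        mul_le_mul_of_nonneg_right (hc_le_one n) (by positivity)
    _ = x ^ n := one_mul _

lemma hyp_mono {x y : ℝ} (h0 : 0 ≤ x) (hxy : x ≤ y) (h1 : y < 1) :
    (∑' n : ℕ, hc n * x ^ n) ≤ ∑' n : ℕ, hc n * y ^ n := by
  refine Summable.tsum_le_tsum (fun n => ?_) (hyp_summable h0 (lt_of_le_of_lt hxy h1))
    (hyp_summable (le_trans h0 hxy) h1)
  exact mul_le_mul_of_nonneg_left (pow_le_pow_left₀ h0 hxy n) (hc_nonneg n)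

lemma hyp_nonneg (x : ℝ) (h0 : 0 ≤ x) : 0 ≤ ∑' n : ℕ, hc n * x ^ n :=
  tsum_nonneg (fun n => by have := hc_nonneg n; positivity)

lemma hyp_le_log {x : ℝ} (h0 : 0 ≤ x) (h1 : x < 1) :
    (∑' n : ℕ, hc n * x ^ n) ≤ 1 - Real.log (1 - x) := by
  have habs : |x| < 1 := by rw [abs_of_nonneg h0]; exact h1
  have hlog := hasSum_pow_div_log_of_abs_lt_one habs
  set g : ℕ → ℝ := fun n => if n = 0 then 1 else x ^ n / n with hg
  have hgs : Summable g := by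
    have : Summable (fun n : ℕ => g (n + 1)) := by
      refine hlog.summable.congr (fun n => ?_)
      simp [hg]
    exact (summable_nat_add_iff 1).mp this
  have hle : ∀ n : ℕ, hc n * x ^ n ≤ g n := by
    intro n
    cases n with
    | zero => simp [hg, hc_zero]
    | succ n =>
      simp only [hg, if_neg (Nat.succ_ne_zero n)]
      have h2 : hc (n + 1) ≤ 1 / ((n:ℝ) + 1) := hc_succ_le n
      have h3 : (0:ℝ) ≤ x ^ (n + 1) := by positivity
      calc hc (n + 1) * x ^ (n + 1) ≤ (1 / ((n:ℝ) + 1)) * x ^ (n + 1) :=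
            mul_le_mul_of_nonneg_right h2 h3
        _ = x ^ (n + 1) / ((n + 1 : ℕ) : ℝ) := by push_cast; ring
  have hsum := Summable.tsum_le_tsum hle (hyp_summable h0 h1) hgs
  refine hsum.trans ?_
  rw [Summable.tsum_eq_zero_add hgs]
  have h4 : ∑' n : ℕ, g (n + 1) = -Real.log (1 - x) := by
    rw [← hlog.tsum_eq]
    refine tsum_congr (fun n => ?_)
    simp [hg]
  rw [h4]
  simp only [hg, if_pos rfl]
  ring_nf
  try exact le_refl _
  try linarith

set_option maxHeartbeats 1000000 in
/-- With `α = 2s - n(1/p - 1/q)` and `-1 < α ≤ 0`, there is a constant `C` such that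
for all `z > 1`,
`∫₀^{z-1} r^α ((z+1)²-r²)^{-1/2} F(1/2,1/2;1;((z-1)²-r²)/((z+1)²-r²)) dr
  ≤ C z⁻¹ (z-1)^{1+α} (1 + ln z)`. -/
theorem weighted_hyp_integral_estimate (s n p q α : ℝ)
    (hα : α = 2 * s - n * (1/p - 1/q)) (h1 : -1 < α) (h2 : α ≤ 0) :
    ∃ C > 0, ∀ z : ℝ, 1 < z →
      (∫ r in (0:ℝ)..(z - 1), r ^ α * (Real.sqrt ((z + 1) ^ 2 - r ^ 2))⁻¹ *
          hypR (1/2) (1/2) 1 (((z - 1) ^ 2 - r ^ 2) / ((z + 1) ^ 2 - r ^ 2)))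
        ≤ C * z⁻¹ * (z - 1) ^ (1 + α) * (1 + Real.log z) := by
  clear hα
  have hα1 : 0 < 1 + α := by linarith
  refine ⟨2 / (1 + α) + 4, by positivity, ?_⟩
  intro z hz
  rw [show (1:ℝ) + α = α + 1 from add_comm 1 α]
  have hz0 : (0:ℝ) < z := by linarith
  set b : ℝ := z - 1 with hbdef
  have hb : 0 < b := by rw [hbdef]; linarith
  have hlz : 0 < Real.log z := Real.log_pos hz
  -- the clamped zeta function
  set ζ : ℝ → ℝ := fun t => ((z - 1) ^ 2 - t ^ 2) / ((z + 1) ^ 2 - t ^ 2) with hζdef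
  set cl : ℝ → ℝ := fun r => min (max r 0) b with hcldef
  set h : ℝ → ℝ := fun r => ∑' k : ℕ, hc k * (ζ (cl r)) ^ k with hhdef
  -- facts about ζ on [0, b]
  have hcl_mem : ∀ r : ℝ, cl r ∈ Set.Icc 0 b := fun r =>
    ⟨le_min (le_max_right r 0) hb.le, min_le_right _ _⟩
  have hD : ∀ t ∈ Set.Icc (0:ℝ) b, 4 * z ≤ (z + 1) ^ 2 - t ^ 2 := by
    intro t ⟨ht0, htb⟩
    have : t ^ 2 ≤ (z - 1) ^ 2 := by nlinarith
    nlinarith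
  have hD0 : ∀ t ∈ Set.Icc (0:ℝ) b, 0 < (z + 1) ^ 2 - t ^ 2 := by
    intro t ht
    have := hD t ht; nlinarith
  have hζ0 : ∀ t ∈ Set.Icc (0:ℝ) b, 0 ≤ ζ t := by
    intro t ⟨ht0, htb⟩
    have hd := hD0 t ⟨ht0, htb⟩
    have hn : 0 ≤ (z - 1) ^ 2 - t ^ 2 := by nlinarith
    exact div_nonneg hn hd.le
  have hζ1 : ∀ t ∈ Set.Icc (0:ℝ) b, ζ t < 1 := by
    intro t ht
    have hd := hD0 t ht
    rw [hζdef, div_lt_one hd]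
    nlinarith
  have hζanti : ∀ t₁ ∈ Set.Icc (0:ℝ) b, ∀ t₂ ∈ Set.Icc (0:ℝ) b, t₁ ≤ t₂ → ζ t₂ ≤ ζ t₁ := by
    intro t₁ ht₁ t₂ ht₂ hle
    have hd₁ := hD0 t₁ ht₁
    have hd₂ := hD0 t₂ ht₂
    rw [hζdef, div_le_div_iff₀ hd₂ hd₁]
    have h12 : t₁ ^ 2 ≤ t₂ ^ 2 := by nlinarith [ht₁.1, ht₂.1]
    nlinarith [h12]
  -- h is antitone, hence measurable
  have hanti : Antitone h := by
    intro r₁ r₂ hr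
    have hclm : cl r₁ ≤ cl r₂ := by
      rw [hcldef]; exact min_le_min (max_le_max hr le_rfl) le_rfl
    exact hyp_mono (hζ0 _ (hcl_mem r₂)) (hζanti _ (hcl_mem r₁) _ (hcl_mem r₂) hclm)
      (hζ1 _ (hcl_mem r₁))
  -- the modified integrand
  set F : ℝ → ℝ := fun r => r ^ α * (Real.sqrt ((z + 1) ^ 2 - r ^ 2))⁻¹ * h r with hFdef
  set F' : ℝ → ℝ := fun r => Real.exp (Real.log r * α) *
      (Real.sqrt ((z + 1) ^ 2 - r ^ 2))⁻¹ * h r with hF'def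
  have hF'meas : Measurable F' := by
    apply Measurable.mul
    apply Measurable.mul
    · exact (Real.measurable_log.mul measurable_const).exp
    · exact ((continuous_const.sub (continuous_pow 2)).sqrt.measurable).inv
    · exact hanti.measurable
  have hFaesm : MeasureTheory.AEStronglyMeasurable F
      (MeasureTheory.volume.restrict (Set.Ioc 0 b)) := by
    apply hF'meas.aestronglyMeasurable.congr
    filter_upwards [MeasureTheory.ae_restrict_mem measurableSet_Ioc] with r hr
    simp only [hF'def, hFdef, Real.rpow_def_of_pos hr.1]
  -- the integrand agrees with F on [0, b]
  have hcongr : Set.EqOn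
      (fun r : ℝ => r ^ α * (Real.sqrt ((z + 1) ^ 2 - r ^ 2))⁻¹ *
        hypR (1/2) (1/2) 1 ((b ^ 2 - r ^ 2) / ((z + 1) ^ 2 - r ^ 2))) F
      (Set.uIcc 0 b) := by
    intro r hr
    simp only [hbdef]
    rw [Set.uIcc_of_le hb.le] at hr
    have hclr : cl r = r := by
      rw [hcldef]; simp only [max_eq_left hr.1, min_eq_left hr.2]
    simp only [hFdef, hhdef, hclr, hypR_eq, hζdef]
  -- the dominating function
  set K : ℝ := (1 + Real.log z) * (Real.sqrt (z + 1))⁻¹ with hKdef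
  have hK0 : 0 < K := by
    rw [hKdef]
    have : (0:ℝ) < Real.sqrt (z + 1) := Real.sqrt_pos.mpr (by linarith)
    positivity
  set φ : ℝ → ℝ := fun r => r ^ α * (Real.sqrt (z + 1 - r))⁻¹ with hφdef
  set G : ℝ → ℝ := fun r => K * φ r with hGdef
  -- integrability of φ and G
  have hsq_cont : ContinuousOn (fun r : ℝ => (Real.sqrt (z + 1 - r))⁻¹) (Set.uIcc 0 b) := by
    apply ContinuousOn.inv₀
    · exact ((continuous_const.sub continuous_id).sqrt).continuousOn
    · intro x hx
      rw [Set.uIcc_of_le hb.le] at hx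
      have : (0:ℝ) < z + 1 - x := by have := hx.2; rw [hbdef] at this; linarith
      exact (Real.sqrt_pos.mpr this).ne'
  have hφ_int : IntervalIntegrable φ MeasureTheory.volume 0 b :=
    (intervalIntegral.intervalIntegrable_rpow' h1).mul_continuousOn hsq_cont
  have hG_int : IntervalIntegrable G MeasureTheory.volume 0 b := hφ_int.const_mul K
  -- pointwise bound F ≤ G on [0, b]
  have hFG : ∀ r ∈ Set.Icc (0:ℝ) b, F r ≤ G r := by
    intro r hr
    have hclr : cl r = r := by
      rw [hcldef]; simp only [max_eq_left hr.1, min_eq_left hr.2]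
    have hd0 := hD0 r hr
    have hd := hD r hr
    -- bound on h r
    have hh_le : h r ≤ 1 + Real.log z := by
      rw [hhdef]; simp only [hclr]
      refine (hyp_le_log (hζ0 r hr) (hζ1 r hr)).trans ?_
      have hone : 1 - ζ r = 4 * z / ((z + 1) ^ 2 - r ^ 2) := by
        rw [hζdef]; field_simp; ring
      rw [hone]
      have hlog2 : -Real.log (4 * z / ((z + 1) ^ 2 - r ^ 2)) ≤ Real.log z := by
        rw [← Real.log_inv]
        apply Real.log_le_log (by positivity)
        rw [inv_div, div_le_iff₀ (by positivity)]
        nlinarith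
      linarith
    have hh_0 : 0 ≤ h r := by
      rw [hhdef]; exact hyp_nonneg _ (hζ0 _ (hcl_mem r))
    -- bound on the sqrt
    have hsqle : (Real.sqrt ((z + 1) ^ 2 - r ^ 2))⁻¹ ≤
        (Real.sqrt (z + 1))⁻¹ * (Real.sqrt (z + 1 - r))⁻¹ := by
      rw [← mul_inv, ← Real.sqrt_mul (by linarith : (0:ℝ) ≤ z + 1)]
      apply inv_anti₀
      · apply Real.sqrt_pos.mpr
        have : (0:ℝ) < z + 1 - r := by have := hr.2; rw [hbdef] at this; linarith
        nlinarith
      · apply Real.sqrt_le_sqrt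
        nlinarith [hr.1, hr.2]
    have hr0 : (0:ℝ) ≤ r ^ α := Real.rpow_nonneg hr.1 α
    have hsq0 : (0:ℝ) ≤ (Real.sqrt ((z + 1) ^ 2 - r ^ 2))⁻¹ := by positivity
    have hsq0' : (0:ℝ) ≤ (Real.sqrt (z + 1))⁻¹ * (Real.sqrt (z + 1 - r))⁻¹ := by positivity
    calc F r = r ^ α * (Real.sqrt ((z + 1) ^ 2 - r ^ 2))⁻¹ * h r := rfl
      _ ≤ r ^ α * (Real.sqrt ((z + 1) ^ 2 - r ^ 2))⁻¹ * (1 + Real.log z) := by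
          apply mul_le_mul_of_nonneg_left hh_le (by positivity)
      _ ≤ r ^ α * ((Real.sqrt (z + 1))⁻¹ * (Real.sqrt (z + 1 - r))⁻¹) * (1 + Real.log z) := by
          apply mul_le_mul_of_nonneg_right (mul_le_mul_of_nonneg_left hsqle hr0) (by linarith)
      _ = G r := by rw [hGdef, hKdef, hφdef]; ring
  -- F is nonnegative on [0, b]
  have hF0 : ∀ r ∈ Set.Icc (0:ℝ) b, 0 ≤ F r := by
    intro r hr
    have : 0 ≤ h r := by rw [hhdef]; exact hyp_nonneg _ (hζ0 _ (hcl_mem r))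
    have hr0 : (0:ℝ) ≤ r ^ α := Real.rpow_nonneg hr.1 α
    have : (0:ℝ) ≤ (Real.sqrt ((z + 1) ^ 2 - r ^ 2))⁻¹ := by positivity
    rw [hFdef]
    positivity
  -- F is interval integrable
  have hF_int : IntervalIntegrable F MeasureTheory.volume 0 b := by
    rw [intervalIntegrable_iff, Set.uIoc_of_le hb.le]
    have hGion : MeasureTheory.IntegrableOn G (Set.Ioc 0 b) MeasureTheory.volume := by
      have := hG_int
      rw [intervalIntegrable_iff, Set.uIoc_of_le hb.le] at this
      exact this
    apply MeasureTheory.Integrable.mono' hGion hFaesm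
    rw [MeasureTheory.ae_restrict_iff' measurableSet_Ioc]
    filter_upwards with r hr
    have hr' : r ∈ Set.Icc (0:ℝ) b := ⟨hr.1.le, hr.2⟩
    rw [Real.norm_eq_abs, abs_of_nonneg (hF0 r hr')]
    exact hFG r hr'
  -- split point
  set m : ℝ := b / 2 with hmdef
  have hm0 : 0 < m := by positivity
  have hmb : m ≤ b := by rw [hmdef]; linarith
  have hsub1 : Set.uIcc (0:ℝ) m ⊆ Set.uIcc (0:ℝ) b := by
    rw [Set.uIcc_of_le hm0.le, Set.uIcc_of_le hb.le]; exact Set.Icc_subset_Icc le_rfl hmb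
  have hsub2 : Set.uIcc m b ⊆ Set.uIcc (0:ℝ) b := by
    rw [Set.uIcc_of_le hmb, Set.uIcc_of_le hb.le]; exact Set.Icc_subset_Icc hm0.le le_rfl
  have hφ1 := hφ_int.mono_set hsub1
  have hφ2 := hφ_int.mono_set hsub2
  have hsplit : (∫ r in (0:ℝ)..b, φ r) = (∫ r in (0:ℝ)..m, φ r) + ∫ r in m..b, φ r :=
    (intervalIntegral.integral_add_adjacent_intervals hφ1 hφ2).symm
  -- abbreviations
  set S : ℝ := (Real.sqrt z)⁻¹ with hSdef
  have hsz : 0 < Real.sqrt z := Real.sqrt_pos.mpr hz0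
  have hS0 : 0 < S := by rw [hSdef]; positivity
  -- first piece
  set c₁ : ℝ := (Real.sqrt (z / 2))⁻¹ with hc₁def
  have hsz2 : 0 < Real.sqrt (z / 2) := Real.sqrt_pos.mpr (by positivity)
  have hc₁eq : c₁ = Real.sqrt 2 * S := by
    rw [hc₁def, hSdef, Real.sqrt_div hz0.le 2, inv_div, div_eq_mul_inv]
  have hI₁ : (∫ r in (0:ℝ)..m, φ r) ≤ ∫ r in (0:ℝ)..m, r ^ α * c₁ := by
    apply intervalIntegral.integral_mono_on hm0.le hφ1
      ((intervalIntegral.intervalIntegrable_rpow' h1).mul_const c₁)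
    intro r hr
    apply mul_le_mul_of_nonneg_left ?_ (Real.rpow_nonneg hr.1 α)
    apply inv_anti₀ hsz2
    apply Real.sqrt_le_sqrt
    have h3 : r ≤ m := hr.2
    rw [hmdef, hbdef] at h3
    linarith
  have hI₁' : (∫ r in (0:ℝ)..m, r ^ α * c₁) = m ^ (α + 1) / (α + 1) * c₁ := by
    rw [intervalIntegral.integral_mul_const, integral_rpow (Or.inl h1),
      Real.zero_rpow (by linarith : α + 1 ≠ 0)]
    ring
  -- second piece
  have hψ_cont : ContinuousOn (fun r : ℝ => (Real.sqrt (z + 1 - r))⁻¹) (Set.uIcc m b) :=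
    hsq_cont.mono hsub2
  have hψ_int : IntervalIntegrable (fun r : ℝ => (Real.sqrt (z + 1 - r))⁻¹)
      MeasureTheory.volume m b := hψ_cont.intervalIntegrable
  have hI₂ : (∫ r in m..b, φ r) ≤ ∫ r in m..b, m ^ α * (Real.sqrt (z + 1 - r))⁻¹ := by
    apply intervalIntegral.integral_mono_on hmb hφ2 (hψ_int.const_mul _)
    intro r hr
    exact mul_le_mul_of_nonneg_right (Real.rpow_le_rpow_of_nonpos hm0 hr.1 h2) (by positivity)
  have hJ : (∫ r in m..b, (Real.sqrt (z + 1 - r))⁻¹) =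
      2 * Real.sqrt (z + 1 - m) - 2 * Real.sqrt (z + 1 - b) := by
    have hderiv : ∀ x ∈ Set.uIcc m b, HasDerivAt (fun r : ℝ => -2 * Real.sqrt (z + 1 - r))
        ((Real.sqrt (z + 1 - x))⁻¹) x := by
      intro x hx
      rw [Set.uIcc_of_le hmb] at hx
      have hxpos : 0 < z + 1 - x := by
        have := hx.2; rw [hbdef] at this; linarith
      have hinner : HasDerivAt (fun r : ℝ => z + 1 - r) (-1) x :=
        (hasDerivAt_id x).const_sub (z + 1)
      have houter := ((Real.hasDerivAt_sqrt hxpos.ne').comp x hinner).const_mul (-2)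
      convert houter using 1
      have hs0 : Real.sqrt (z + 1 - x) ≠ 0 := (Real.sqrt_pos.mpr hxpos).ne'
      · rfl
      · rfl
      · rfl
      · ring
    rw [intervalIntegral.integral_eq_sub_of_hasDerivAt hderiv hψ_int]
    ring
  have hJle : 2 * Real.sqrt (z + 1 - m) - 2 * Real.sqrt (z + 1 - b) ≤ 2 * b * S := by
    set A := Real.sqrt (z + 1 - m) with hAdef
    set B := Real.sqrt (z + 1 - b) with hBdef
    have hm' : z + 1 - m = (z + 3) / 2 := by rw [hmdef, hbdef]; ring
    have hb' : z + 1 - b = 2 := by rw [hbdef]; ring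
    have hA2 : A ^ 2 = (z + 3) / 2 := by rw [hAdef, Real.sq_sqrt (by linarith), hm']
    have hB2 : B ^ 2 = 2 := by rw [hBdef, Real.sq_sqrt (by rw [hb']; norm_num), hb']
    have hZ2 : (Real.sqrt z) ^ 2 = z := Real.sq_sqrt hz0.le
    have hA0 : 0 < A := Real.sqrt_pos.mpr (by rw [hm']; linarith)
    have hB0 : 0 < B := Real.sqrt_pos.mpr (by rw [hb']; norm_num)
    have hABle : B ≤ A := by
      rw [hAdef, hBdef]; exact Real.sqrt_le_sqrt (by rw [hm', hb']; linarith)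
    have hZA : Real.sqrt z ≤ 2 * A := by
      calc Real.sqrt z ≤ Real.sqrt ((2 * A) ^ 2) := Real.sqrt_le_sqrt (by nlinarith [hA2])
        _ = 2 * A := Real.sqrt_sq (by positivity)
    have hAB0 : 0 ≤ A - B := by linarith
    have h1' : Real.sqrt z * (A - B) ≤ 2 * (A + B) * (A - B) :=
      mul_le_mul_of_nonneg_right (by linarith [hB0.le]) hAB0
    have h2' : 2 * (A + B) * (A - B) = b := by
      rw [hbdef]; linear_combination 2 * hA2 - 2 * hB2
    have key : Real.sqrt z * (A - B) ≤ b := h1'.trans_eq h2'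
    rw [hSdef, mul_comm (2 * b), ← div_eq_inv_mul, le_div_iff₀ hsz]
    nlinarith [key]
  have hmα : m ^ α ≤ 2 * b ^ α := by
    rw [hmdef, Real.div_rpow hb.le (by norm_num : (0:ℝ) ≤ 2)]
    have h2α : (1:ℝ) / 2 ≤ (2:ℝ) ^ α := by
      have := Real.rpow_le_rpow_of_exponent_le (by norm_num : (1:ℝ) ≤ 2)
        (by linarith : (-1:ℝ) ≤ α)
      rwa [Real.rpow_neg_one, show ((2:ℝ))⁻¹ = 1/2 by norm_num] at this
    have hbα : 0 < b ^ α := Real.rpow_pos_of_pos hb α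
    have h2α0 : 0 < (2:ℝ) ^ α := Real.rpow_pos_of_pos two_pos α
    rw [div_le_iff₀ h2α0]
    nlinarith
  -- combine
  have hJ0 : 0 ≤ 2 * Real.sqrt (z + 1 - m) - 2 * Real.sqrt (z + 1 - b) := by
    have : Real.sqrt (z + 1 - b) ≤ Real.sqrt (z + 1 - m) :=
      Real.sqrt_le_sqrt (by rw [hmdef, hbdef]; linarith)
    linarith
  have hP : 0 < b ^ (α + 1) := Real.rpow_pos_of_pos hb (α + 1)
  have hmP : m ^ (α + 1) ≤ b ^ (α + 1) := Real.rpow_le_rpow hm0.le hmb (by linarith)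
  have hbα1 : b ^ α * b = b ^ (α + 1) := (Real.rpow_add_one hb.ne' α).symm
  have hsqrt2 : Real.sqrt 2 ≤ 2 := by
    nlinarith [Real.sq_sqrt (by norm_num : (0:ℝ) ≤ 2), Real.sqrt_nonneg 2]
  have hφtot : (∫ r in (0:ℝ)..b, φ r) ≤ (2 / (α + 1) + 4) * b ^ (α + 1) * S := by
    rw [hsplit]
    have hα1' : (0:ℝ) < α + 1 := by linarith
    have e1 : (∫ r in (0:ℝ)..m, φ r) ≤ 2 / (α + 1) * b ^ (α + 1) * S := by
      refine hI₁.trans ?_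
      rw [hI₁', hc₁eq]
      calc m ^ (α + 1) / (α + 1) * (Real.sqrt 2 * S)
          ≤ b ^ (α + 1) / (α + 1) * (2 * S) := by
            apply mul_le_mul ((div_le_div_iff_of_pos_right hα1').mpr hmP)
              (mul_le_mul_of_nonneg_right hsqrt2 hS0.le) (by positivity) (by positivity)
        _ = 2 / (α + 1) * b ^ (α + 1) * S := by ring
    have e2 : (∫ r in m..b, φ r) ≤ 4 * b ^ (α + 1) * S := by
      refine hI₂.trans ?_
      rw [intervalIntegral.integral_const_mul, hJ]
      calc m ^ α * (2 * Real.sqrt (z + 1 - m) - 2 * Real.sqrt (z + 1 - b))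
          ≤ (2 * b ^ α) * (2 * b * S) := by
            apply mul_le_mul hmα hJle hJ0 (by positivity)
        _ = 4 * b ^ (α + 1) * S := by rw [← hbα1]; ring
    refine (add_le_add e1 e2).trans_eq (by ring)
  -- final assembly
  have hWS : (Real.sqrt (z + 1))⁻¹ * S ≤ z⁻¹ := by
    rw [hSdef, ← mul_inv]
    apply inv_anti₀ hz0
    rw [← Real.sqrt_mul (by linarith : (0:ℝ) ≤ z + 1)]
    calc z = Real.sqrt (z ^ 2) := (Real.sqrt_sq hz0.le).symm
      _ ≤ Real.sqrt ((z + 1) * z) := Real.sqrt_le_sqrt (by nlinarith)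
  rw [intervalIntegral.integral_congr hcongr]
  refine le_trans (intervalIntegral.integral_mono_on hb.le hF_int hG_int hFG) ?_
  have hGK : (∫ r in (0:ℝ)..b, G r) = K * ∫ r in (0:ℝ)..b, φ r := by
    simp only [hGdef]
    exact intervalIntegral.integral_const_mul K φ
  rw [hGK]
  refine le_trans (mul_le_mul_of_nonneg_left hφtot hK0.le) ?_
  have hL : (0:ℝ) < 1 + Real.log z := by linarith
  have hα1' : (0:ℝ) < α + 1 := by linarith
  have hC0 : (0:ℝ) ≤ 2 / (α + 1) + 4 := by
    have := div_pos two_pos hα1'; linarith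
  calc K * ((2 / (α + 1) + 4) * b ^ (α + 1) * S)
      = ((2 / (α + 1) + 4) * b ^ (α + 1) * (1 + Real.log z)) * ((Real.sqrt (z + 1))⁻¹ * S) := by
        rw [hKdef]; ring
    _ ≤ ((2 / (α + 1) + 4) * b ^ (α + 1) * (1 + Real.log z)) * z⁻¹ := by
        apply mul_le_mul_of_nonneg_left hWS
        exact mul_nonneg (mul_nonneg hC0 hP.le) hL.le
    _ = (2 / (α + 1) + 4) * z⁻¹ * b ^ (α + 1) * (1 + Real.log z) := by ring
end

section
/- Define the kernel K₁(z,t) = (4e^{-t})^{iM}((1+e^{-t})² - z²)^{-1/2-iM} F(1/2+iM, 1/2+iM; 1; ((1-e^{-t})² - z²)/((1+e^{-t})² - z²)) for 0 ≤ z ≤ 1 - e^{-t}. Then for every ρ ∈ [1,2) there is a constant C such that (∫₀^{1-e^{-t}} |K₁(z,t)|^ρ dz)^{1/ρ} ≤ C (1+t)(1 - e^{-t})^{1/ρ} for all t > 0. -/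
open Finset Complex


lemma asc_eval_prod (x : ℂ) (n : ℕ) :
    (ascPochhammer ℂ n).eval x = ∏ k ∈ range n, (x + k) := by
  induction n with
  | zero => simp
  | succ n ih =>
      rw [ascPochhammer_succ_right, prod_range_succ, ← ih]
      simp [Polynomial.eval_mul]

lemma sum_inv_sq_le (n : ℕ) : ∑ k ∈ range n, (((k:ℝ)+1/2)^2)⁻¹ ≤ 5 - ((n:ℝ))⁻¹ := by
  induction n with
  | zero => simp
  | succ n ih =>
      rcases Nat.eq_zero_or_pos n with rfl | hn
      · norm_num
      · rw [Finset.sum_range_succ]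
        have hn' : (1:ℝ) ≤ n := by exact_mod_cast hn
        have h1 : (((n:ℝ)+1/2)^2)⁻¹ ≤ ((n:ℝ))⁻¹ - ((n:ℝ)+1)⁻¹ := by
          have he : ((n:ℝ))⁻¹ - ((n:ℝ)+1)⁻¹ = ((n:ℝ)*((n:ℝ)+1))⁻¹ := by
            field_simp; ring
          rw [he]
          apply inv_anti₀ (by positivity)
          nlinarith
        push_cast
        linarith

lemma prod_ratio_sq (n : ℕ) :
    (∏ k ∈ range n, (((k:ℝ)+1/2)/((k:ℝ)+1)))^2 * (2*(n:ℝ)+1) ≤ 1 := by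
  induction n with
  | zero => simp
  | succ n ih =>
      rw [prod_range_succ, mul_pow]
      have hr : (((n:ℝ)+1/2)/((n:ℝ)+1))^2 * (2*((n:ℝ)+1)+1) ≤ (2*(n:ℝ)+1) := by
        rw [div_pow, div_mul_eq_mul_div, div_le_iff₀ (by positivity)]
        nlinarith [sq_nonneg ((n:ℝ))]
      push_cast
      nlinarith [sq_nonneg (∏ k ∈ range n, (((k:ℝ)+1/2)/((k:ℝ)+1)))]

/-- modulus-squared of the complex Pochhammer coefficient -/

lemma coef_sq (M : ℝ) (n : ℕ) :
    ‖(ascPochhammer ℂ n).eval (1/2 + Complex.I*M)‖ ^ 2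
      ≤ Real.exp (5*M^2) * (∏ k ∈ range n, (((k:ℝ)+1/2)))^2 := by
  rw [asc_eval_prod]
  rw [norm_prod]
  rw [← Finset.prod_pow]
  have habs : ∀ k : ℕ, ‖(1/2 + Complex.I*M) + (k:ℂ)‖ ^ 2
      = ((k:ℝ)+1/2)^2 + M^2 := by
    intro k
    rw [Complex.sq_norm]
    simp [Complex.normSq_apply]
    ring
  calc ∏ k ∈ range n, ‖(1/2 + Complex.I*M) + (k:ℂ)‖ ^ 2
      = ∏ k ∈ range n, (((k:ℝ)+1/2)^2 + M^2) := by
        exact Finset.prod_congr rfl fun k _ => habs k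
    _ ≤ ∏ k ∈ range n, (((k:ℝ)+1/2)^2 * Real.exp (M^2 * (((k:ℝ)+1/2)^2)⁻¹)) := by
        apply Finset.prod_le_prod
        · intro k _; positivity
        · intro k _
          have h := Real.add_one_le_exp (M^2 * (((k:ℝ)+1/2)^2)⁻¹)
          have hk : (0:ℝ) < ((k:ℝ)+1/2)^2 := by positivity
          calc ((k:ℝ)+1/2)^2 + M^2
              = ((k:ℝ)+1/2)^2 * (M^2 * (((k:ℝ)+1/2)^2)⁻¹ + 1) := by
                field_simp; ring
            _ ≤ ((k:ℝ)+1/2)^2 * Real.exp (M^2 * (((k:ℝ)+1/2)^2)⁻¹) :=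
                mul_le_mul_of_nonneg_left h (le_of_lt hk)
    _ = (∏ k ∈ range n, ((k:ℝ)+1/2)^2) * Real.exp (∑ k ∈ range n, M^2 * (((k:ℝ)+1/2)^2)⁻¹) := by
        rw [Finset.prod_mul_distrib, Real.exp_sum]
    _ ≤ (∏ k ∈ range n, ((k:ℝ)+1/2)^2) * Real.exp (5*M^2) := by
        apply mul_le_mul_of_nonneg_left _ (by positivity)
        apply Real.exp_le_exp.2
        rw [← Finset.mul_sum]
        calc M^2 * ∑ k ∈ range n, (((k:ℝ)+1/2)^2)⁻¹ ≤ M^2 * (5 - ((n:ℝ))⁻¹) :=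
              mul_le_mul_of_nonneg_left (sum_inv_sq_le n) (sq_nonneg M)
          _ ≤ 5 * M^2 := by
              have : (0:ℝ) ≤ ((n:ℝ))⁻¹ := by positivity
              nlinarith [sq_nonneg M]
    _ = Real.exp (5*M^2) * (∏ k ∈ range n, (((k:ℝ)+1/2)))^2 := by
        rw [Finset.prod_pow]; ring

lemma term_abs_le (M ζ : ℝ) (h0 : 0 ≤ ζ) (n : ℕ) :
    ‖((ascPochhammer ℂ n).eval (1/2 + Complex.I*M) *
        (ascPochhammer ℂ n).eval (1/2 + Complex.I*M) /
        ((ascPochhammer ℂ n).eval 1 * (n.factorial : ℂ))) * (ζ:ℂ) ^ n‖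
      ≤ Real.exp (5*M^2) / (2*(n:ℝ)+1) * ζ ^ n := by
  have hfac : ‖(ascPochhammer ℂ n).eval 1 * (n.factorial : ℂ)‖
      = (n.factorial : ℝ) * (n.factorial : ℝ) := by
    rw [ascPochhammer_eval_one, norm_mul]
    simp
  rw [norm_mul, norm_div, hfac, norm_mul]
  have hz : ‖(ζ:ℂ) ^ n‖ = ζ ^ n := by
    rw [norm_pow, Complex.norm_of_nonneg h0]
  rw [hz]
  apply mul_le_mul_of_nonneg_right _ (by positivity)
  rw [div_le_iff₀ (by positivity)]
  have key : ‖(ascPochhammer ℂ n).eval (1/2 + Complex.I*M)‖ ^ 2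
        * (2*(n:ℝ)+1)
      ≤ Real.exp (5*M^2) * ((n.factorial:ℝ) * (n.factorial:ℝ)) := by
    have h1 := coef_sq M n
    have h2 := prod_ratio_sq n
    have hfprod : (n.factorial : ℝ) = ∏ k ∈ range n, ((k:ℝ)+1) := by
      rw [← Finset.prod_range_add_one_eq_factorial]
      push_cast
      exact Finset.prod_congr rfl fun k _ => by ring
    have hratio : (∏ k ∈ range n, (((k:ℝ)+1/2)))^2
        ≤ (n.factorial:ℝ)^2 / (2*(n:ℝ)+1) := by
      have hfpos : (0:ℝ) < (n.factorial:ℝ) := by positivity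
      have : (∏ k ∈ range n, (((k:ℝ)+1/2)/((k:ℝ)+1)))
          = (∏ k ∈ range n, (((k:ℝ)+1/2))) / (n.factorial:ℝ) := by
        rw [hfprod, Finset.prod_div_distrib]
      rw [this] at h2
      rw [div_pow] at h2
      rw [div_mul_eq_mul_div, div_le_one (by positivity)] at h2
      rw [le_div_iff₀ (by positivity)]
      linarith
    calc ‖(ascPochhammer ℂ n).eval (1/2 + Complex.I*M)‖ ^ 2 * (2*(n:ℝ)+1)
        ≤ Real.exp (5*M^2) * (∏ k ∈ range n, (((k:ℝ)+1/2)))^2 * (2*(n:ℝ)+1) := by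
          apply mul_le_mul_of_nonneg_right h1 (by positivity)
      _ ≤ Real.exp (5*M^2) * ((n.factorial:ℝ)^2 / (2*(n:ℝ)+1)) * (2*(n:ℝ)+1) := by
          apply mul_le_mul_of_nonneg_right _ (by positivity)
          exact mul_le_mul_of_nonneg_left hratio (by positivity)
      _ = Real.exp (5*M^2) * ((n.factorial:ℝ) * (n.factorial:ℝ)) := by
          field_simp
  rw [div_mul_eq_mul_div, le_div_iff₀ (by positivity)]
  nlinarith [key]

lemma hyp_abs (M ζ : ℝ) (h0 : 0 ≤ ζ) (h1 : ζ < 1) :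
    ‖hypC (1/2 + Complex.I*M) (1/2 + Complex.I*M) 1 (ζ:ℂ)‖
      ≤ Real.exp (5*M^2) * (1 - Real.log (1-ζ)/2) := by
  set C := Real.exp (5*M^2) with hC
  have hCpos : 0 < C := Real.exp_pos _
  set f : ℕ → ℂ := fun n => ((ascPochhammer ℂ n).eval (1/2 + Complex.I*M) *
        (ascPochhammer ℂ n).eval (1/2 + Complex.I*M) /
        ((ascPochhammer ℂ n).eval 1 * (n.factorial : ℂ))) * (ζ:ℂ) ^ n with hf
  set u : ℕ → ℝ := fun n => ζ ^ n / (2*(n:ℝ)+1) with hu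
  have hfu : ∀ n, ‖f n‖ ≤ C * u n := by
    intro n
    have := term_abs_le M ζ h0 n
    calc ‖f n‖ ≤ C / (2*(n:ℝ)+1) * ζ ^ n := this
      _ = C * u n := by rw [hu]; ring
  have hu_nonneg : ∀ n, 0 ≤ u n := fun n => by positivity
  have hu_sum : Summable u := by
    apply Summable.of_nonneg_of_le hu_nonneg _ (summable_geometric_of_lt_one h0 h1)
    intro n
    rw [hu]
    rw [div_le_iff₀ (by positivity)]
    nlinarith [pow_nonneg h0 n, (Nat.cast_nonneg n : (0:ℝ) ≤ n)]
  have habs_sum : Summable (fun n => ‖f n‖) :=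
    Summable.of_nonneg_of_le (fun n => norm_nonneg _) hfu (hu_sum.mul_left C)
  have hrepr : hypC (1/2 + Complex.I*M) (1/2 + Complex.I*M) 1 (ζ:ℂ) = ∑' n, f n := rfl
  rw [hrepr]
  have h2 : ‖∑' n, f n‖ ≤ ∑' n, C * u n :=
    le_trans (norm_tsum_le_tsum_norm habs_sum) (Summable.tsum_le_tsum hfu habs_sum (hu_sum.mul_left C))
  have hlog : HasSum (fun n : ℕ => ζ^(n+1)/((n:ℝ)+1)) (-Real.log (1-ζ)) := by
    apply Real.hasSum_pow_div_log_of_abs_lt_one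
    rw [_root_.abs_of_nonneg h0]; exact h1
  have h4 : ∑' n, u n ≤ 1 - Real.log (1-ζ)/2 := by
    rw [hu_sum.tsum_eq_zero_add]
    have hu0 : u 0 = 1 := by simp [hu]
    have htail : ∑' n, u (n+1) ≤ ∑' n : ℕ, (1/2) * (ζ^(n+1)/((n:ℝ)+1)) := by
      apply Summable.tsum_le_tsum _ (hu_sum.comp_injective (add_left_injective 1))
        (hlog.summable.mul_left (1/2))
      intro n
      simp only [Function.comp_apply, hu]
      have hc : (2 * (((n+1:ℕ)):ℝ) + 1) = 2*((n:ℝ)+1)+1 := by push_cast; ring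
      have hn1 : ((n:ℝ)+1) ≠ 0 := by positivity
      have he : 1/2 * (ζ^(n+1)/((n:ℝ)+1)) = ζ^(n+1) / (2*((n:ℝ)+1)) := by
        field_simp
      rw [hc, he]
      apply div_le_div_of_nonneg_left (pow_nonneg h0 _) (by positivity)
      linarith
    have htsum : ∑' n : ℕ, (1/2) * (ζ^(n+1)/((n:ℝ)+1)) = -Real.log (1-ζ)/2 := by
      rw [(hlog.mul_left (1/2)).tsum_eq]; ring
    rw [htsum] at htail
    rw [hu0]
    linarith
  calc ‖∑' n, f n‖ ≤ ∑' n, C * u n := h2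
    _ = C * ∑' n, u n := tsum_mul_left
    _ ≤ C * (1 - Real.log (1-ζ)/2) := by
        apply mul_le_mul_of_nonneg_left h4 hCpos.le

lemma coef_abs_le (M : ℝ) (n : ℕ) :
    ‖(ascPochhammer ℂ n).eval (1/2 + Complex.I*M) *
        (ascPochhammer ℂ n).eval (1/2 + Complex.I*M) /
        ((ascPochhammer ℂ n).eval 1 * (n.factorial : ℂ))‖
      ≤ Real.exp (5*M^2) := by
  have h := term_abs_le M 1 zero_le_one n
  simp only [Complex.ofReal_one, one_pow, mul_one] at h
  calc _ ≤ Real.exp (5*M^2) / (2*(n:ℝ)+1) := h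
    _ ≤ Real.exp (5*M^2) := by
      rw [div_le_iff₀ (by positivity)]
      nlinarith [Real.exp_pos (5*M^2), (Nat.cast_nonneg n : (0:ℝ) ≤ n)]

lemma hyp_contOn (M : ℝ) (r : ℝ) (h0 : 0 ≤ r) (h1 : r < 1) :
    ContinuousOn (fun w : ℂ => hypC (1/2 + Complex.I*M) (1/2 + Complex.I*M) 1 w)
      (Metric.closedBall 0 r) := by
  apply continuousOn_tsum (u := fun n => Real.exp (5*M^2) * r^n)
  · intro n
    exact (continuous_const.mul (continuous_pow n)).continuousOn
  · exact (summable_geometric_of_lt_one h0 h1).mul_left _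
  · intro n w hw
    rw [norm_mul, norm_pow]
    have h2 : ‖w‖ ≤ r := by
      simpa [Complex.dist_eq] using Metric.mem_closedBall.1 hw
    calc ‖_‖ * ‖w‖^n ≤ Real.exp (5*M^2) * r^n := by
          apply mul_le_mul (coef_abs_le M n) (pow_le_pow_left₀ (norm_nonneg w) h2 n)
            (by positivity) (by positivity)

lemma Ek_abs (M t : ℝ) (ht : 0 < t) (z : ℝ) (hz0 : 0 ≤ z)
    (hzL : z ≤ 1 - Real.exp (-t)) :
    ‖Ek M z t 0‖
      ≤ Real.exp (5*M^2) * (1+t) * ((Real.exp (-t) + 1)^2 - z^2) ^ (-(1/2) : ℝ) := by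
  set e := Real.exp (-t) with he
  have hepos : 0 < e := Real.exp_pos _
  have helt : e < 1 := by
    rw [he]; exact Real.exp_lt_one_iff.2 (by linarith)
  set A : ℝ := (e + 1)^2 - z^2 with hA
  set N : ℝ := (1 - e)^2 - z^2 with hN
  have hApos : 0 < A := by
    have : z < e + 1 := by nlinarith
    nlinarith
  have hNnonneg : 0 ≤ N := by nlinarith
  have hAN : A - N = 4*e := by ring
  have hA4 : A ≤ 4 := by nlinarith
  set ζ : ℝ := N / A with hζ
  have hζ0 : 0 ≤ ζ := div_nonneg hNnonneg hApos.le
  have hζ1 : ζ < 1 := by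
    rw [hζ, div_lt_one hApos]; nlinarith
  -- rewrite Ek
  have hb : Real.exp (-(0:ℝ)) = 1 := by norm_num
  rw [Ek]
  rw [norm_mul, norm_mul]
  -- first factor
  have h1 : ‖(4 * Real.exp (-(0:ℝ) - t) : ℂ) ^ (Complex.I * M)‖ = 1 := by
    have hx : (4 * Real.exp (-(0:ℝ) - t) : ℂ) = ((4 * Real.exp (-(0:ℝ) - t) : ℝ) : ℂ) := by
      push_cast; ring
    rw [hx, Complex.norm_cpow_eq_rpow_re_of_pos (by positivity)]
    simp
  -- second factor
  have h2 : ‖((Real.exp (-t) + Real.exp (-(0:ℝ)) : ℂ) ^ 2 - (z : ℂ) ^ 2)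
        ^ (-(1/2 : ℂ) - Complex.I * M)‖ = A ^ (-(1/2) : ℝ) := by
    have hx : ((Real.exp (-t) + Real.exp (-(0:ℝ)) : ℂ) ^ 2 - (z : ℂ) ^ 2) = ((A : ℝ) : ℂ) := by
      rw [hA, ← he, hb]; push_cast; ring
    rw [hx, Complex.norm_cpow_eq_rpow_re_of_pos hApos]
    norm_num
  -- third factor
  have h3 : (((Real.exp (-(0:ℝ)) - Real.exp (-t) : ℂ) ^ 2 - (z : ℂ) ^ 2) /
        ((Real.exp (-(0:ℝ)) + Real.exp (-t) : ℂ) ^ 2 - (z : ℂ) ^ 2)) = ((ζ : ℝ) : ℂ) := by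
    rw [hζ, hN, hA, ← he, hb]; push_cast; ring
  rw [h1, h2, h3, one_mul]
  have h4 := hyp_abs M ζ hζ0 hζ1
  have hlog : -Real.log (1-ζ) ≤ t := by
    have h1ζ : 1 - ζ = 4*e/A := by
      rw [hζ]; field_simp; linarith [hAN]
    rw [h1ζ, Real.log_div (by positivity) (by positivity)]
    have hle : Real.log A ≤ Real.log 4 := Real.log_le_log hApos hA4
    have h4e : Real.log (4*e) = Real.log 4 + Real.log e := Real.log_mul (by norm_num) hepos.ne'
    have hloge : Real.log e = -t := by rw [he, Real.log_exp]
    linarith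
  have hbd : Real.exp (5*M^2) * (1 - Real.log (1-ζ)/2) ≤ Real.exp (5*M^2) * (1+t) := by
    apply mul_le_mul_of_nonneg_left _ (Real.exp_pos _).le
    linarith
  have hrpow_nonneg : (0:ℝ) ≤ A ^ (-(1/2) : ℝ) := Real.rpow_nonneg hApos.le _
  calc A ^ (-(1/2) : ℝ) * ‖hypC (1/2 + Complex.I*M) (1/2 + Complex.I*M) 1 ((ζ:ℝ):ℂ)‖
      ≤ A ^ (-(1/2) : ℝ) * (Real.exp (5*M^2) * (1+t)) := by
        apply mul_le_mul_of_nonneg_left (le_trans h4 hbd) hrpow_nonneg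
    _ = Real.exp (5*M^2) * (1+t) * A ^ (-(1/2) : ℝ) := by ring

lemma Ek_contOn (M t : ℝ) (ht : 0 < t) :
    ContinuousOn (fun z : ℝ => Ek M z t 0) (Set.Icc 0 (1 - Real.exp (-t))) := by
  set e := Real.exp (-t) with he
  have hepos : 0 < e := Real.exp_pos _
  have helt : e < 1 := by rw [he]; exact Real.exp_lt_one_iff.2 (by linarith)
  set r : ℝ := (1-e)^2/(1+e)^2 with hr
  have hr0 : 0 ≤ r := by positivity
  have hr1 : r < 1 := by
    rw [hr, div_lt_one (by positivity)]; nlinarith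
  -- denominators / bases positivity facts
  have hbase : ∀ z ∈ Set.Icc (0:ℝ) (1-e),
      (0:ℝ) < (e+1)^2 - z^2 := by
    rintro z ⟨hz0, hz1⟩; nlinarith
  have hb0 : Real.exp (-(0:ℝ)) = 1 := by norm_num
  unfold Ek
  apply ContinuousOn.mul
  apply ContinuousOn.mul
  · exact continuousOn_const
  · -- cpow factor
    intro z hz
    apply ContinuousAt.continuousWithinAt
    apply ContinuousAt.cpow
    · fun_prop
    · exact continuousAt_const
    · -- base in slitPlane
      have : ((Real.exp (-t) + Real.exp (-(0:ℝ)) : ℂ) ^ 2 - (z : ℂ) ^ 2)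
          = (((e+1)^2 - z^2 : ℝ) : ℂ) := by
        rw [← he, hb0]; push_cast; ring
      rw [this, Complex.ofReal_mem_slitPlane]
      exact hbase z hz
  · -- hypergeometric factor
    apply ContinuousOn.comp (hyp_contOn M r hr0 hr1)
    · -- argument continuous
      apply ContinuousOn.div
      · fun_prop
      · fun_prop
      · intro z hz
        have : ((Real.exp (-(0:ℝ)) + Real.exp (-t) : ℂ) ^ 2 - (z : ℂ) ^ 2)
            = (((e+1)^2 - z^2 : ℝ) : ℂ) := by
          rw [← he, hb0]; push_cast; ring
        rw [this]
        exact_mod_cast (hbase z hz).ne'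
    · -- maps to closed ball
      rintro z ⟨hz0, hz1⟩
      rw [Metric.mem_closedBall, dist_zero_right]
      have hAz : (0:ℝ) < (e+1)^2 - z^2 := hbase z ⟨hz0, hz1⟩
      have harg : (((Real.exp (-(0:ℝ)) - Real.exp (-t) : ℂ) ^ 2 - (z : ℂ) ^ 2) /
          ((Real.exp (-(0:ℝ)) + Real.exp (-t) : ℂ) ^ 2 - (z : ℂ) ^ 2))
          = ((((1-e)^2 - z^2)/((e+1)^2 - z^2) : ℝ) : ℂ) := by
        rw [← he, hb0]; push_cast; ring
      simp only [harg, Complex.norm_real, Real.norm_eq_abs]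
      have hnum : 0 ≤ (1-e)^2 - z^2 := by nlinarith
      rw [_root_.abs_of_nonneg (div_nonneg hnum hAz.le)]
      rw [hr, div_le_div_iff₀ hAz (by positivity)]
      nlinarith

lemma int_A_bound (ρ : ℝ) (hρ1 : 1 ≤ ρ) (hρ2 : ρ < 2) (t : ℝ) (ht : 0 < t) :
    ∫ z in (0:ℝ)..(1 - Real.exp (-t)), ((Real.exp (-t) + 1)^2 - z^2) ^ (-(ρ/2) : ℝ)
      ≤ (8/(2-ρ)) * (1 - Real.exp (-t)) := by
  set e := Real.exp (-t) with he
  have hepos : 0 < e := Real.exp_pos _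
  have helt : e < 1 := by rw [he]; exact Real.exp_lt_one_iff.2 (by linarith)
  set L : ℝ := 1 - e with hL
  have hL0 : 0 < L := by simp [hL]; linarith
  have hbase : ∀ z ∈ Set.Icc (0:ℝ) L, (0:ℝ) < (e+1)^2 - z^2 := by
    rintro z ⟨hz0, hz1⟩; simp only [hL] at hz1; nlinarith
  have hcont : ContinuousOn (fun z : ℝ => ((e+1)^2 - z^2) ^ (-(ρ/2) : ℝ)) (Set.Icc 0 L) := by
    apply ContinuousOn.rpow_const (by fun_prop)
    intro z hz; exact Or.inl (hbase z hz).ne'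
  have hInt : IntervalIntegrable (fun z : ℝ => ((e+1)^2 - z^2) ^ (-(ρ/2) : ℝ))
      MeasureTheory.volume 0 L := by
    apply ContinuousOn.intervalIntegrable
    rwa [Set.uIcc_of_le hL0.le]
  have h8 : (1:ℝ) ≤ 8/(2-ρ) := by
    rw [le_div_iff₀ (by linarith)]; linarith
  rcases le_or_gt t 1 with ht1 | ht1
  · -- small t : integrand ≤ 1
    have hexp1 : (1:ℝ)/4 ≤ e := by
      rw [he]
      have h1 : Real.exp (-t) ≥ Real.exp (-1) := Real.exp_le_exp.2 (by linarith)
      have h2 : Real.exp (-1) = (Real.exp 1)⁻¹ := by rw [← Real.exp_neg]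
      have h3 : Real.exp 1 ≤ 4 := by
        have := Real.exp_one_lt_d9; linarith
      have h4 : (1:ℝ)/4 ≤ (Real.exp 1)⁻¹ := by
        rw [one_div]
        exact inv_anti₀ (Real.exp_pos 1) h3
      linarith
    have hpt : ∀ z ∈ Set.Icc (0:ℝ) L, ((e+1)^2 - z^2) ^ (-(ρ/2) : ℝ) ≤ 1 := by
      rintro z ⟨hz0, hz1⟩
      apply Real.rpow_le_one_of_one_le_of_nonpos
      · simp only [hL] at hz1; nlinarith
      · linarith
    calc ∫ z in (0:ℝ)..L, ((e+1)^2 - z^2) ^ (-(ρ/2) : ℝ)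
        ≤ ∫ z in (0:ℝ)..L, (1:ℝ) := by
          apply intervalIntegral.integral_mono_on hL0.le hInt intervalIntegrable_const
          exact hpt
      _ = L := by simp
      _ ≤ (8/(2-ρ)) * L := by nlinarith
  · -- large t : compare with (c - z)^(-ρ/2)
    set c : ℝ := e + 1 with hc
    have hcpos : 0 < c := by positivity
    have hptwise : ∀ z ∈ Set.Icc (0:ℝ) L,
        ((e+1)^2 - z^2) ^ (-(ρ/2) : ℝ) ≤ (c - z) ^ (-(ρ/2) : ℝ) := by
      rintro z ⟨hz0, hz1⟩
      have hz1' : z ≤ 1 - e := hz1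
      have hcz : 0 < c - z := by simp only [hc]; nlinarith
      apply Real.rpow_le_rpow_of_nonpos hcz _ (by linarith)
      nlinarith
    have hInt2 : IntervalIntegrable (fun z : ℝ => (c - z) ^ (-(ρ/2) : ℝ))
        MeasureTheory.volume 0 L := by
      apply ContinuousOn.intervalIntegrable
      apply ContinuousOn.rpow_const (by fun_prop)
      rintro z hz
      rw [Set.uIcc_of_le hL0.le] at hz
      obtain ⟨hz0, hz1⟩ := hz
      left
      have : 0 < c - z := by simp only [hc, hL] at *; nlinarith
      exact this.ne'
    have hval : ∫ z in (0:ℝ)..L, (c - z) ^ (-(ρ/2) : ℝ)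
        = ∫ u in (c - L)..c, u ^ (-(ρ/2) : ℝ) := by
      have := intervalIntegral.integral_comp_sub_left (a := 0) (b := L)
        (fun u : ℝ => u ^ (-(ρ/2) : ℝ)) c
      simpa using this
    have hcL : c - L = 2*e := by simp [hc, hL]; ring
    have hrint : ∫ u in (c - L)..c, u ^ (-(ρ/2) : ℝ)
        = (c ^ (-(ρ/2)+1) - (c-L) ^ (-(ρ/2)+1)) / (-(ρ/2)+1) := by
      rw [integral_rpow (Or.inl (by linarith))]
    have hs : 0 < -(ρ/2) + 1 := by linarith
    have hcLpos : 0 < c - L := by rw [hcL]; positivity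
    have hbound : (c ^ (-(ρ/2)+1) - (c-L) ^ (-(ρ/2)+1)) / (-(ρ/2)+1) ≤ 4/(2-ρ) := by
      have h1 : (c:ℝ) ≤ 2 := by simp [hc]; linarith
      have h2 : c ^ (-(ρ/2)+1) ≤ 2 := by
        calc c ^ (-(ρ/2)+1) ≤ (2:ℝ) ^ (-(ρ/2)+1) :=
              Real.rpow_le_rpow hcpos.le h1 hs.le
          _ ≤ (2:ℝ) ^ (1:ℝ) := by
              apply Real.rpow_le_rpow_of_exponent_le (by norm_num) (by linarith)
          _ = 2 := by norm_num
      have h3 : 0 ≤ (c-L) ^ (-(ρ/2)+1) := Real.rpow_nonneg hcLpos.le _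
      rw [div_le_div_iff₀ hs (by linarith)]
      nlinarith
    have hLhalf : (1:ℝ)/2 ≤ L := by
      have : e ≤ Real.exp (-1) := by
        rw [he]; exact Real.exp_le_exp.2 (by linarith)
      have h2 : Real.exp (-1) ≤ 1/2 := by
        rw [Real.exp_neg]
        rw [inv_le_comm₀ (Real.exp_pos 1) (by norm_num)]
        have := Real.add_one_le_exp 1; linarith
      simp only [hL]; linarith
    calc ∫ z in (0:ℝ)..L, ((e+1)^2 - z^2) ^ (-(ρ/2) : ℝ)
        ≤ ∫ z in (0:ℝ)..L, (c - z) ^ (-(ρ/2) : ℝ) :=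
          intervalIntegral.integral_mono_on hL0.le hInt hInt2 hptwise
      _ = (c ^ (-(ρ/2)+1) - (c-L) ^ (-(ρ/2)+1)) / (-(ρ/2)+1) := by rw [hval, hrint]
      _ ≤ 4/(2-ρ) := hbound
      _ ≤ (8/(2-ρ)) * L := by
          rw [div_mul_eq_mul_div, div_le_div_iff₀ (by linarith) (by linarith)]
          nlinarith
/-- The kernel `K₁(z,t) = E(z,t;0,0)` satisfies, for every `ρ ∈ [1,2)`,
`(∫₀^{1-e^{-t}} |K₁(z,t)|^ρ dz)^{1/ρ} ≤ C (1+t)(1-e^{-t})^{1/ρ}` for all `t > 0`. -/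
theorem K1_Lrho_estimate (M : ℝ) (hM : 0 ≤ M) (ρ : ℝ) (hρ1 : 1 ≤ ρ) (hρ2 : ρ < 2) :
    ∃ C > 0, ∀ t : ℝ, 0 < t →
      (∫ z in (0:ℝ)..(1 - Real.exp (-t)), ‖Ek M z t 0‖ ^ ρ) ^ (1/ρ)
        ≤ C * (1 + t) * (1 - Real.exp (-t)) ^ (1/ρ) := by
  have hρ0 : (0:ℝ) < ρ := by linarith
  set K : ℝ := Real.exp (5*M^2) with hK
  have hKpos : 0 < K := Real.exp_pos _
  set D : ℝ := 8/(2-ρ) with hD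
  have hDpos : 0 < D := by rw [hD]; exact div_pos (by norm_num) (by linarith)
  have hD1 : (1:ℝ) ≤ D := by
    rw [hD, le_div_iff₀ (by linarith)]; linarith
  refine ⟨K * D, by positivity, ?_⟩
  intro t ht
  set e := Real.exp (-t) with he
  have hepos : 0 < e := Real.exp_pos _
  have helt : e < 1 := by rw [he]; exact Real.exp_lt_one_iff.2 (by linarith)
  set L : ℝ := 1 - e with hL
  have hL0 : 0 < L := by rw [hL]; linarith
  have h1t : (0:ℝ) < 1 + t := by linarith
  -- pointwise bound raised to power ρ
  have hpt : ∀ z ∈ Set.Icc (0:ℝ) L,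
      ‖Ek M z t 0‖ ^ ρ
        ≤ (K*(1+t))^ρ * ((e + 1)^2 - z^2) ^ (-(ρ/2) : ℝ) := by
    rintro z ⟨hz0, hz1⟩
    have hz1' : z ≤ 1 - e := by rw [hL] at hz1; exact hz1
    have hA : (0:ℝ) < (e+1)^2 - z^2 := by nlinarith
    have h1 := Ek_abs M t ht z hz0 hz1'
    have h2 : ‖Ek M z t 0‖ ^ ρ
        ≤ (K * (1+t) * ((e + 1)^2 - z^2) ^ (-(1/2) : ℝ)) ^ ρ := by
      apply Real.rpow_le_rpow (norm_nonneg _) _ hρ0.le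
      rw [hK]
      calc ‖Ek M z t 0‖
          ≤ Real.exp (5*M^2) * (1+t) * ((e + 1)^2 - z^2) ^ (-(1/2) : ℝ) := by
            have heq : ((Real.exp (-t) + 1)^2 - z^2 : ℝ) = (e+1)^2 - z^2 := by rw [← he]
            rw [← heq]; exact h1
        _ = _ := by ring
    refine h2.trans (le_of_eq ?_)
    rw [Real.mul_rpow (by positivity) (Real.rpow_nonneg hA.le _),
      ← Real.rpow_mul hA.le]
    congr 1
    ring
  -- integrability of both sides
  have hcontA : ContinuousOn (fun z : ℝ => ((e+1)^2 - z^2) ^ (-(ρ/2) : ℝ)) (Set.Icc 0 L) := by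
    apply ContinuousOn.rpow_const (by fun_prop)
    rintro z ⟨hz0, hz1⟩
    have hz1' : z ≤ 1 - e := by rw [hL] at hz1; exact hz1
    have hA : (0:ℝ) < (e+1)^2 - z^2 := by nlinarith
    exact Or.inl hA.ne'
  have hIntA : IntervalIntegrable
      (fun z : ℝ => (K*(1+t))^ρ * ((e+1)^2 - z^2) ^ (-(ρ/2) : ℝ))
      MeasureTheory.volume 0 L := by
    apply ContinuousOn.intervalIntegrable
    rw [Set.uIcc_of_le hL0.le]
    exact continuousOn_const.mul hcontA
  have hIntE : IntervalIntegrable (fun z : ℝ => ‖Ek M z t 0‖ ^ ρ)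
      MeasureTheory.volume 0 L := by
    apply ContinuousOn.intervalIntegrable
    rw [Set.uIcc_of_le hL0.le]
    have hEc := Ek_contOn M t ht
    rw [show (1 - Real.exp (-t)) = L by rw [hL, he]] at hEc
    have hnorm : ContinuousOn (fun z : ℝ => ‖Ek M z t 0‖) (Set.Icc 0 L) := by
      have := hEc.norm
      simpa using this
    exact hnorm.rpow_const (fun z _ => Or.inr hρ0.le)
  -- integral bound
  have hIA := int_A_bound ρ hρ1 hρ2 t ht
  rw [← he, ← hL] at hIA
  have hint : (∫ z in (0:ℝ)..L, ‖Ek M z t 0‖ ^ ρ)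
      ≤ (K*(1+t))^ρ * (D * L) := by
    calc (∫ z in (0:ℝ)..L, ‖Ek M z t 0‖ ^ ρ)
        ≤ ∫ z in (0:ℝ)..L, (K*(1+t))^ρ * ((e+1)^2 - z^2) ^ (-(ρ/2) : ℝ) :=
          intervalIntegral.integral_mono_on hL0.le hIntE hIntA hpt
      _ = (K*(1+t))^ρ * ∫ z in (0:ℝ)..L, ((e+1)^2 - z^2) ^ (-(ρ/2) : ℝ) :=
          intervalIntegral.integral_const_mul _ _
      _ ≤ (K*(1+t))^ρ * (D * L) := by
          apply mul_le_mul_of_nonneg_left _ (Real.rpow_nonneg (by positivity) _)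
          rw [hD]
          have heq : ((Real.exp (-t) + 1) : ℝ) = e + 1 := by rw [← he]
          calc (∫ z in (0:ℝ)..L, ((e+1)^2 - z^2) ^ (-(ρ/2) : ℝ)) = _ := by rw [heq]
            _ ≤ (8/(2-ρ)) * L := hIA
  -- take rpow 1/ρ
  have hInonneg : 0 ≤ ∫ z in (0:ℝ)..L, ‖Ek M z t 0‖ ^ ρ := by
    apply intervalIntegral.integral_nonneg hL0.le
    intro z _
    positivity
  have hfinal : (∫ z in (0:ℝ)..L, ‖Ek M z t 0‖ ^ ρ) ^ (1/ρ)
      ≤ ((K*(1+t))^ρ * (D * L)) ^ (1/ρ) :=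
    Real.rpow_le_rpow hInonneg hint (by positivity)
  refine hfinal.trans ?_
  have hDL : (0:ℝ) ≤ D * L := by positivity
  rw [Real.mul_rpow (Real.rpow_nonneg (by positivity) _) hDL,
    ← Real.rpow_mul (by positivity : (0:ℝ) ≤ K*(1+t)),
    mul_one_div_cancel hρ0.ne', Real.rpow_one,
    Real.mul_rpow hDpos.le hL0.le]
  have hDle : D ^ (1/ρ : ℝ) ≤ D := by
    calc D ^ (1/ρ : ℝ) ≤ D ^ (1:ℝ) := by
          apply Real.rpow_le_rpow_of_exponent_le hD1
          rw [div_le_one hρ0]; linarith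
      _ = D := Real.rpow_one D
  calc K*(1+t) * (D ^ (1/ρ:ℝ) * L ^ (1/ρ:ℝ))
      ≤ K*(1+t) * (D * L ^ (1/ρ:ℝ)) := by
        apply mul_le_mul_of_nonneg_left _ (by positivity)
        exact mul_le_mul_of_nonneg_right hDle (Real.rpow_nonneg hL0.le _)
    _ = K * D * (1 + t) * L ^ (1/ρ:ℝ) := by ring
end
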